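/- arXiv:1302.0815 — 5 statements merged into one kernel-verified Lean document; each statement's English description precedes it below -/
import Mathlib

section
/- Let H be a complex Hilbert space, A, B : H → H bounded linear operators with adjoint(A) = −A and adjoint(B) = −B, let u : ℝ → ℝ be continuous, and let ψ : ℝ → H be differentiable with derivative ψ′(t) = A(ψ(t)) + u(t) • B(ψ(t)) at every t. Then the energy function E(t) = Re⟨ψ(t), i • A(ψ(t))⟩ is differentiable at every t with derivative E′(t) = u(t) · Re⟨ψ(t), i • (A(B(ψ(t))) − B(A(ψ(t))))⟩. In particular, if u ≡ 0 then E is constant. -/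
open ContinuousLinearMap in
lemma skew_inner {H : Type*} [NormedAddCommGroup H] [InnerProductSpace ℂ H] [CompleteSpace H]
    (T : H →L[ℂ] H) (hT : ContinuousLinearMap.adjoint T = -T) (x y : H) :
    (inner ℂ (T x) y : ℂ) = -inner ℂ x (T y) := by
  have := ContinuousLinearMap.adjoint_inner_left T y x
  rw [hT] at this
  simp only [ContinuousLinearMap.neg_apply, inner_neg_left] at this
  linear_combination -this

/-- Evolution of the energy `E(t) = Re⟪ψ(t), i • A ψ(t)⟫` along solutions of the
bilinear Schrödinger equation with bounded skew-adjoint operators: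
`E'(t) = u(t) · Re⟪ψ(t), i • (AB − BA) ψ(t)⟫`; in particular the energy is
constant when the control vanishes. -/
theorem energy_evolution_bilinear_schrodinger
    {H : Type*} [NormedAddCommGroup H] [InnerProductSpace ℂ H] [CompleteSpace H]
    (A B : H →L[ℂ] H)
    (hA : ContinuousLinearMap.adjoint A = -A)
    (hB : ContinuousLinearMap.adjoint B = -B)
    (u : ℝ → ℝ) (hu : Continuous u)
    (ψ : ℝ → H)
    (hψ : ∀ t : ℝ, HasDerivAt ψ (A (ψ t) + u t • B (ψ t)) t) :
    (∀ t : ℝ,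
      HasDerivAt (fun s => (inner ℂ (ψ s) (Complex.I • A (ψ s)) : ℂ).re)
        (u t * (inner ℂ (ψ t) (Complex.I • (A (B (ψ t)) - B (A (ψ t)))) : ℂ).re) t) ∧
    ((∀ t : ℝ, u t = 0) → ∀ s t : ℝ,
      (inner ℂ (ψ s) (Complex.I • A (ψ s)) : ℂ).re
        = (inner ℂ (ψ t) (Complex.I • A (ψ t)) : ℂ).re) := by
  have key : ∀ t : ℝ,
      HasDerivAt (fun s => (inner ℂ (ψ s) (Complex.I • A (ψ s)) : ℂ).re)
        (u t * (inner ℂ (ψ t) (Complex.I • (A (B (ψ t)) - B (A (ψ t)))) : ℂ).re) t := by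
    intro t
    set x := ψ t
    set y := A x + u t • B x
    have hAψ : HasDerivAt (fun s => Complex.I • A (ψ s)) (Complex.I • A y) t := by
      have := (((Complex.I • A).restrictScalars ℝ).hasFDerivAt
        (x := ψ t)).comp_hasDerivAt t (hψ t)
      simpa [Function.comp_def, y, map_add, ContinuousLinearMap.map_smul_of_tower, smul_add, smul_comm (u t) Complex.I] using this
    have hinner : HasDerivAt (fun s => (inner ℂ (ψ s) (Complex.I • A (ψ s)) : ℂ))
        (inner ℂ x (Complex.I • A y) + inner ℂ y (Complex.I • A x)) t :=
      (hψ t).inner ℂ hAψ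
    have hre := (Complex.reCLM.hasFDerivAt.comp_hasDerivAt t hinner)
    have hval : ((inner ℂ x (Complex.I • A y) + inner ℂ y (Complex.I • A x) : ℂ)).re
        = u t * (inner ℂ x (Complex.I • (A (B x) - B (A x))) : ℂ).re := by
      have hc : (inner ℂ x (Complex.I • A y) + inner ℂ y (Complex.I • A x) : ℂ)
          = (u t : ℂ) * (inner ℂ x (Complex.I • (A (B x) - B (A x))) : ℂ) := by
        have h1 : (inner ℂ (A x) (A x) : ℂ) = -inner ℂ x (A (A x)) := skew_inner A hA x (A x)
        have h2 : (inner ℂ (B x) (A x) : ℂ) = -inner ℂ x (B (A x)) := skew_inner B hB x (A x)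
        simp only [y, map_add, ContinuousLinearMap.map_smul_of_tower, inner_add_left,
          inner_smul_right, inner_smul_real_left, inner_smul_real_right, map_sub,
          inner_sub_right, inner_add_right]
        have e1 : (inner ℂ (u t • B x) (A x) : ℂ) = (u t : ℂ) * inner ℂ (B x) (A x) := by
          rw [← Complex.coe_smul, inner_smul_left]; simp
        have e2 : (inner ℂ x (u t • A (B x)) : ℂ) = (u t : ℂ) * inner ℂ x (A (B x)) := by
          rw [← Complex.coe_smul, inner_smul_right]
        rw [e1, e2, h2, h1]
        ring
      rw [hc, Complex.re_ofReal_mul]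
    simp only [Function.comp_def, Complex.reCLM_apply] at hre
    rw [hval] at hre
    exact hre
  refine ⟨key, fun hu0 s t => ?_⟩
  have : ∀ r : ℝ, HasDerivAt (fun s => (inner ℂ (ψ s) (Complex.I • A (ψ s)) : ℂ).re) 0 r := by
    intro r; simpa [hu0 r] using key r
  have := is_const_of_deriv_eq_zero (fun r => (this r).differentiableAt)
    (fun r => (this r).deriv) s t
  exact this
end

section
/- Let H be a complex Hilbert space, A, B : H → H bounded linear operators with adjoint(A) = −A and adjoint(B) = −B, let φ ∈ H and λ ∈ ℝ satisfy A(φ) = (−iλ) • φ, let T > 0, let u : ℝ → ℝ be integrable on [0,T], and let ψ : ℝ → H be continuous with ‖ψ(0)‖ ≤ 1 and ψ(t) = ψ(0) + ∫₀ᵗ (A(ψ(s)) + u(s) • B(ψ(s))) ds for all t ∈ [0,T]. Then | |⟨φ, ψ(T)⟩| − |⟨φ, ψ(0)⟩| | ≤ ‖B(φ)‖ · ∫₀ᵀ |u(t)| dt. Equivalently, the L¹-norm of any control steering the eigenstate-overlap of the system is bounded below: ∫₀ᵀ |u| ≥ ( | |⟨φ, ψ(0)⟩| − |⟨φ, ψ(T)⟩|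 | ) / ‖B(φ)‖ whenever B(φ) ≠ 0. -/
open MeasureTheory intervalIntegral

/-- Fubini on a triangle. -/
lemma tri_swap {E : Type*} [NormedAddCommGroup E] [NormedSpace ℝ E] [CompleteSpace E]
    {t : ℝ} (ht : 0 ≤ t) {k : ℝ → ℝ → E}
    (hk : Integrable (Function.uncurry k)
      ((volume.restrict (Set.Ioc 0 t)).prod (volume.restrict (Set.Ioc 0 t)))) :
    (∫ s in (0:ℝ)..t, (∫ r in (0:ℝ)..s, k s r))
      = ∫ r in (0:ℝ)..t, ∫ s in r..t, k s r := by
  set μ := volume.restrict (Set.Ioc (0:ℝ) t) with hμ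
  set K : ℝ × ℝ → E := fun p => if p.2 ≤ p.1 then k p.1 p.2 else 0 with hK
  have hKind : K = Set.indicator {p : ℝ × ℝ | p.2 ≤ p.1} (Function.uncurry k) := by
    ext p; simp [hK, Set.indicator_apply, Function.uncurry]
  have hKint : Integrable K (μ.prod μ) := by
    rw [hKind]
    exact hk.indicator (measurableSet_le measurable_snd measurable_fst)
  have h1 : (∫ s in (0:ℝ)..t, (∫ r in (0:ℝ)..s, k s r))
      = ∫ s, ∫ r, K (s, r) ∂μ ∂μ := by
    rw [intervalIntegral.integral_of_le ht, hμ]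
    refine setIntegral_congr_fun measurableSet_Ioc (fun s hs => ?_)
    have h2 : (∫ r, K (s, r) ∂μ) = ∫ r in Set.Iic s, k s r ∂μ := by
      rw [← MeasureTheory.integral_indicator measurableSet_Iic]
      refine integral_congr_ae (Filter.Eventually.of_forall fun r => ?_)
      simp [hK, Set.indicator_apply, Set.mem_Iic]
    rw [h2, hμ, Measure.restrict_restrict measurableSet_Iic]
    have : Set.Iic s ∩ Set.Ioc 0 t = Set.Ioc 0 s := by
      ext r; simp only [Set.mem_inter_iff, Set.mem_Iic, Set.mem_Ioc]
      constructor
      · rintro ⟨h1, h2, h3⟩; exact ⟨h2, h1⟩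
      · rintro ⟨h1, h2⟩; exact ⟨h2, h1, h2.trans hs.2⟩
    rw [this, intervalIntegral.integral_of_le hs.1.le]
  rw [h1, integral_integral_swap hKint, intervalIntegral.integral_of_le ht, hμ]
  refine setIntegral_congr_fun measurableSet_Ioc (fun r hr => ?_)
  have h2 : (∫ s, K (s, r) ∂μ) = ∫ s in Set.Ici r, k s r ∂μ := by
    rw [← MeasureTheory.integral_indicator measurableSet_Ici]
    refine integral_congr_ae (Filter.Eventually.of_forall fun s => ?_)
    simp [hK, Set.indicator_apply, Set.mem_Ici]
  rw [h2, hμ, Measure.restrict_restrict measurableSet_Ici]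
  have : Set.Ici r ∩ Set.Ioc 0 t = Set.Icc r t := by
    ext s; simp only [Set.mem_inter_iff, Set.mem_Ici, Set.mem_Ioc, Set.mem_Icc]
    constructor
    · rintro ⟨h1, _, h3⟩; exact ⟨h1, h3⟩
    · rintro ⟨h1, h2⟩; exact ⟨h1, hr.1.trans_le h1, h2⟩
  rw [this, integral_Icc_eq_integral_Ioc, intervalIntegral.integral_of_le hr.2]

/-- composition of a continuous linear map with an interval integrable function. -/
lemma clm_intervalIntegrable {𝕜 : Type*} [RCLike 𝕜] {E F : Type*}
    [NormedAddCommGroup E] [NormedSpace 𝕜 E] [NormedAddCommGroup F] [NormedSpace 𝕜 F]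
    (L : E →L[𝕜] F) {f : ℝ → E} {a b : ℝ} (h : IntervalIntegrable f volume a b) :
    IntervalIntegrable (fun x => L (f x)) volume a b := by
  rw [intervalIntegrable_iff] at h ⊢
  exact L.integrable_comp h

/-- skew-adjointness kills the real part of ⟪x, L x⟫. -/
lemma skew_re {H : Type*} [NormedAddCommGroup H] [InnerProductSpace ℂ H] [CompleteSpace H]
    (L : H →L[ℂ] H) (hL : ContinuousLinearMap.adjoint L = -L) (x : H) :
    (inner ℂ x (L x) : ℂ).re = 0 := by
  have h1 := ContinuousLinearMap.adjoint_inner_left L x x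
  rw [hL] at h1
  have h2 : (inner ℂ (L x) x : ℂ) = - inner ℂ x (L x) := by
    rw [← h1]; simp [inner_neg_left]
  have h3 : (inner ℂ x (L x) : ℂ).re = (inner ℂ (L x) x : ℂ).re := by
    simpa using (inner_re_symm (𝕜 := ℂ) x (L x))
  rw [h2] at h3
  simp at h3
  linarith


/-- The variation of the modulus of the overlap of a solution of the bilinear
Schrödinger equation with an eigenvector `φ` of `A` is bounded by the `L¹` norm
of the control times `‖Bφ‖`; equivalently the `L¹` norm of a control steering
the eigenstate-overlap is bounded below. -/
theorem overlap_variation_le_L1_norm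
    {H : Type*} [NormedAddCommGroup H] [InnerProductSpace ℂ H] [CompleteSpace H]
    (A B : H →L[ℂ] H)
    (hA : ContinuousLinearMap.adjoint A = -A)
    (hB : ContinuousLinearMap.adjoint B = -B)
    (φ : H) (lam : ℝ) (hφ : A φ = (-(Complex.I * (lam : ℂ))) • φ)
    (T : ℝ) (hT : 0 < T)
    (u : ℝ → ℝ) (hu : IntegrableOn u (Set.Icc 0 T))
    (ψ : ℝ → H) (hψ_cont : Continuous ψ) (hψ0 : ‖ψ 0‖ ≤ 1)
    (hψ : ∀ t ∈ Set.Icc (0 : ℝ) T,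
      ψ t = ψ 0 + ∫ s in (0 : ℝ)..t, (A (ψ s) + u s • B (ψ s))) :
    (|‖inner ℂ φ (ψ T)‖ - ‖inner ℂ φ (ψ 0)‖|
      ≤ ‖B φ‖ * ∫ t in (0 : ℝ)..T, |u t|) ∧
    (B φ ≠ 0 →
      (|‖inner ℂ φ (ψ 0)‖ - ‖inner ℂ φ (ψ T)‖|) / ‖B φ‖
        ≤ ∫ t in (0 : ℝ)..T, |u t|) := by
  classical
  have hT0 : (0:ℝ) ≤ T := hT.le
  set Hf : ℝ → H := fun s => A (ψ s) + u s • B (ψ s) with hHf_def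
  -- basic continuity facts
  have hBψ_cont : Continuous fun s => B (ψ s) := B.continuous.comp hψ_cont
  have hAψ_cont : Continuous fun s => A (ψ s) := A.continuous.comp hψ_cont
  obtain ⟨C, hC⟩ : ∃ C, ∀ s ∈ Set.Icc (0:ℝ) T, ‖B (ψ s)‖ ≤ C :=
    isCompact_Icc.exists_bound_of_continuousOn hBψ_cont.continuousOn
  -- integrability of Hf
  have hHf_int : IntegrableOn Hf (Set.Icc 0 T) := by
    refine Integrable.add (hAψ_cont.continuousOn.integrableOn_compact isCompact_Icc) ?_
    refine Integrable.mono' ((hu.norm).const_mul C)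
      (hu.aestronglyMeasurable.smul hBψ_cont.aestronglyMeasurable) ?_
    refine (ae_restrict_iff' measurableSet_Icc).2 (Filter.Eventually.of_forall fun s hs => ?_)
    rw [norm_smul]
    calc ‖u s‖ * ‖B (ψ s)‖ ≤ ‖u s‖ * C := by
          have := hC s hs
          have h0 : (0:ℝ) ≤ ‖u s‖ := norm_nonneg _
          nlinarith [norm_nonneg (B (ψ s))]
      _ = C * ‖u s‖ := mul_comm _ _
  have hHf_ii : ∀ a b : ℝ, a ∈ Set.Icc (0:ℝ) T → b ∈ Set.Icc (0:ℝ) T →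
      IntervalIntegrable Hf volume a b := by
    intro a b ha hb
    rw [intervalIntegrable_iff]
    exact hHf_int.mono_set ((Set.Ioc_subset_Icc_self).trans (Set.uIcc_subset_Icc ha hb))
  -- primitive relation
  have hImem : ∀ t ∈ Set.Icc (0:ℝ) T, (∫ s in (0:ℝ)..t, Hf s) = ψ t - ψ 0 := by
    intro t ht
    rw [hψ t ht]
    abel
  -- pointwise vanishing of re ⟪ψ s, Hf s⟫
  have hre0 : ∀ s : ℝ, (inner ℂ (ψ s) (Hf s) : ℂ).re = 0 := by
    intro s
    have h1 : (inner ℂ (ψ s) (Hf s) : ℂ)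
        = inner ℂ (ψ s) (A (ψ s)) + (u s : ℂ) * inner ℂ (ψ s) (B (ψ s)) := by
      rw [hHf_def]
      simp only [inner_add_right]
      rw [RCLike.real_smul_eq_coe_smul (K := ℂ), inner_smul_right]
      norm_cast
    rw [h1]
    simp only [Complex.add_re, Complex.mul_re, Complex.ofReal_re, Complex.ofReal_im]
    rw [skew_re A hA, skew_re B hB]
    ring
  -- norm conservation
  have hnorm : ∀ t ∈ Set.Icc (0:ℝ) T, ‖ψ t‖ = ‖ψ 0‖ := by
    intro t ht
    have h0t : (0:ℝ) ≤ t := ht.1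
    have hsubT : ∀ a b : ℝ, a ∈ Set.Icc (0:ℝ) t → b ∈ Set.Icc (0:ℝ) t →
        IntervalIntegrable Hf volume a b := fun a b ha hb =>
      hHf_ii a b ⟨ha.1, ha.2.trans ht.2⟩ ⟨hb.1, hb.2.trans ht.2⟩
    set x := ψ t - ψ 0 with hxdef
    have hxI : (∫ s in (0:ℝ)..t, Hf s) = x := hImem t ht
    have hHf_t : IntegrableOn Hf (Set.Ioc 0 t) :=
      hHf_int.mono_set (fun r hr => ⟨hr.1.le, hr.2.trans ht.2⟩)
    -- auxiliary: inner against a fixed vector commutes with interval integrals of Hf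
    have hcomm : ∀ (v : H) (a b : ℝ), a ∈ Set.Icc (0:ℝ) t → b ∈ Set.Icc (0:ℝ) t →
        (inner ℂ v (∫ s in a..b, Hf s) : ℂ) = ∫ s in a..b, (inner ℂ v (Hf s) : ℂ) := by
      intro v a b ha hb
      have := (innerSL ℂ v).intervalIntegral_comp_comm (hsubT a b ha hb)
      simpa using this.symm
    have hinner_ii : ∀ (v : H) (a b : ℝ),
        IntervalIntegrable (fun s => (inner ℂ v (Hf s) : ℂ)) volume a b →
        (∫ s in a..b, (inner ℂ v (Hf s) : ℂ)).re = ∫ s in a..b, (inner ℂ v (Hf s) : ℂ).re := by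
      intro v a b hI
      have := Complex.reCLM.intervalIntegral_comp_comm hI
      simpa using this.symm
    have hinner_Hf_ii : ∀ (v : H) (a b : ℝ), a ∈ Set.Icc (0:ℝ) t → b ∈ Set.Icc (0:ℝ) t →
        IntervalIntegrable (fun s => (inner ℂ v (Hf s) : ℂ)) volume a b := by
      intro v a b ha hb
      exact clm_intervalIntegrable (innerSL ℂ v) (hsubT a b ha hb)
    have hre_comm : ∀ (v : H) (a b : ℝ), a ∈ Set.Icc (0:ℝ) t → b ∈ Set.Icc (0:ℝ) t →
        (inner ℂ v (∫ s in a..b, Hf s) : ℂ).re = ∫ s in a..b, (inner ℂ v (Hf s) : ℂ).re := by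
      intro v a b ha hb
      rw [hcomm v a b ha hb, hinner_ii v a b (hinner_Hf_ii v a b ha hb)]
    have h0mem : (0:ℝ) ∈ Set.Icc (0:ℝ) t := ⟨le_refl 0, h0t⟩
    have htmem : t ∈ Set.Icc (0:ℝ) t := ⟨h0t, le_refl t⟩
    -- G is interval integrable
    obtain ⟨D, hD⟩ : ∃ D, ∀ s ∈ Set.Icc (0:ℝ) T, ‖ψ s - ψ 0‖ ≤ D :=
      isCompact_Icc.exists_bound_of_continuousOn ((hψ_cont.sub continuous_const).continuousOn)
    have hG_int : IntervalIntegrable (fun s => (inner ℂ (ψ s - ψ 0) (Hf s) : ℂ).re) volume 0 t := by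
      rw [intervalIntegrable_iff, Set.uIoc_of_le h0t]
      refine Integrable.mono' (hHf_t.norm.const_mul D)
        (Complex.continuous_re.comp_aestronglyMeasurable
          (((hψ_cont.sub continuous_const).aestronglyMeasurable).inner hHf_t.aestronglyMeasurable))
        ?_
      refine (ae_restrict_iff' measurableSet_Ioc).2 (Filter.Eventually.of_forall fun s hs => ?_)
      have h1 : |(inner ℂ (ψ s - ψ 0) (Hf s) : ℂ).re| ≤ ‖(inner ℂ (ψ s - ψ 0) (Hf s) : ℂ)‖ :=
        Complex.abs_re_le_norm _
      have h2 : ‖(inner ℂ (ψ s - ψ 0) (Hf s) : ℂ)‖ ≤ ‖ψ s - ψ 0‖ * ‖Hf s‖ := norm_inner_le_norm _ _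
      have h3 : ‖ψ s - ψ 0‖ ≤ D := hD s ⟨hs.1.le, hs.2.trans ht.2⟩
      have h4 : (0:ℝ) ≤ ‖Hf s‖ := norm_nonneg _
      simp only [Real.norm_eq_abs]
      nlinarith
    -- step (i)
    have hstep1 : (inner ℂ x x : ℂ).re = ∫ s in (0:ℝ)..t, (inner ℂ x (Hf s) : ℂ).re := by
      have : (inner ℂ x x : ℂ) = inner ℂ x (∫ s in (0:ℝ)..t, Hf s) := by rw [hxI]
      rw [this, hre_comm x 0 t h0mem htmem]
    -- step (ii): pointwise decomposition
    have hstep2 : ∀ s ∈ Set.Icc (0:ℝ) t,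
        (inner ℂ x (Hf s) : ℂ).re = (inner ℂ (ψ s - ψ 0) (Hf s) : ℂ).re
          + ∫ r in s..t, (inner ℂ (Hf r) (Hf s) : ℂ).re := by
      intro s hs
      have hsmem : s ∈ Set.Icc (0:ℝ) t := hs
      have hseg : (∫ r in s..t, Hf r) = x - (ψ s - ψ 0) := by
        have := intervalIntegral.integral_interval_sub_left (hsubT 0 t h0mem htmem)
          (hsubT 0 s h0mem hsmem)
        rw [hxI, hImem s ⟨hs.1, hs.2.trans ht.2⟩] at this
        exact this.symm
      have h5 : (inner ℂ x (Hf s) : ℂ).re - (inner ℂ (ψ s - ψ 0) (Hf s) : ℂ).re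
          = (inner ℂ (x - (ψ s - ψ 0)) (Hf s) : ℂ).re := by
        conv_rhs => rw [inner_sub_left, Complex.sub_re]
      have h6 : (inner ℂ (x - (ψ s - ψ 0)) (Hf s) : ℂ).re
          = (inner ℂ (Hf s) (x - (ψ s - ψ 0)) : ℂ).re := by
        exact inner_re_symm (𝕜 := ℂ) (x - (ψ s - ψ 0)) (Hf s)
      have h7 : (inner ℂ (Hf s) (x - (ψ s - ψ 0)) : ℂ).re
          = ∫ r in s..t, (inner ℂ (Hf s) (Hf r) : ℂ).re := by
        rw [← hseg, hre_comm (Hf s) s t hsmem htmem]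
      have h8 : (∫ r in s..t, (inner ℂ (Hf s) (Hf r) : ℂ).re)
          = ∫ r in s..t, (inner ℂ (Hf r) (Hf s) : ℂ).re := by
        refine intervalIntegral.integral_congr (fun r _ => ?_)
        simpa using inner_re_symm (𝕜 := ℂ) (Hf s) (Hf r)
      linarith [h5, h6.trans (h7.trans h8)]
    -- integrate (ii): the three pieces
    have hxHf_ii : IntervalIntegrable (fun s => (inner ℂ x (Hf s) : ℂ).re) volume 0 t :=
      clm_intervalIntegrable Complex.reCLM (hinner_Hf_ii x 0 t h0mem htmem)
    have hstep3 : (∫ s in (0:ℝ)..t, ∫ r in s..t, (inner ℂ (Hf r) (Hf s) : ℂ).re)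
        = (∫ s in (0:ℝ)..t, (inner ℂ x (Hf s) : ℂ).re)
          - ∫ s in (0:ℝ)..t, (inner ℂ (ψ s - ψ 0) (Hf s) : ℂ).re := by
      rw [← intervalIntegral.integral_sub hxHf_ii hG_int]
      refine intervalIntegral.integral_congr (fun s hs => ?_)
      rw [Set.uIcc_of_le h0t] at hs
      have := hstep2 s hs
      linarith
    -- Fubini step
    have hmeas : AEStronglyMeasurable Hf (volume.restrict (Set.Ioc 0 t)) :=
      hHf_t.aestronglyMeasurable
    have hfub : (∫ s in (0:ℝ)..t, ∫ r in s..t, (inner ℂ (Hf r) (Hf s) : ℂ).re)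
        = ∫ s in (0:ℝ)..t, ∫ r in (0:ℝ)..s, (inner ℂ (Hf s) (Hf r) : ℂ).re := by
      have hint : Integrable (Function.uncurry (fun s r => (inner ℂ (Hf s) (Hf r) : ℂ).re))
          ((volume.restrict (Set.Ioc 0 t)).prod (volume.restrict (Set.Ioc 0 t))) := by
        refine Integrable.mono' (hHf_t.norm.mul_prod hHf_t.norm)
          (Complex.continuous_re.comp_aestronglyMeasurable
            ((hmeas.comp_fst).inner (hmeas.comp_snd))) ?_
        refine Filter.Eventually.of_forall fun p => ?_
        have h1 : |(inner ℂ (Hf p.1) (Hf p.2) : ℂ).re| ≤ ‖(inner ℂ (Hf p.1) (Hf p.2) : ℂ)‖ :=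
          Complex.abs_re_le_norm _
        have h2 : ‖(inner ℂ (Hf p.1) (Hf p.2) : ℂ)‖ ≤ ‖Hf p.1‖ * ‖Hf p.2‖ := norm_inner_le_norm _ _
        simp only [Real.norm_eq_abs, Function.uncurry]
        exact h1.trans h2
      exact (tri_swap h0t hint).symm
    have hfub2 : (∫ s in (0:ℝ)..t, ∫ r in (0:ℝ)..s, (inner ℂ (Hf s) (Hf r) : ℂ).re)
        = ∫ s in (0:ℝ)..t, (inner ℂ (ψ s - ψ 0) (Hf s) : ℂ).re := by
      refine intervalIntegral.integral_congr (fun s hs => ?_)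
      rw [Set.uIcc_of_le h0t] at hs
      have h9 : (∫ r in (0:ℝ)..s, (inner ℂ (Hf s) (Hf r) : ℂ).re)
          = (inner ℂ (Hf s) (ψ s - ψ 0) : ℂ).re := by
        rw [← hImem s ⟨hs.1, hs.2.trans ht.2⟩,
          hre_comm (Hf s) 0 s h0mem hs]
      rw [h9]
      exact inner_re_symm (𝕜 := ℂ) (Hf s) (ψ s - ψ 0)
    -- combine: re ⟪x,x⟫ = 2 ∫ G
    have hxx : (inner ℂ x x : ℂ).re
        = 2 * ∫ s in (0:ℝ)..t, (inner ℂ (ψ s - ψ 0) (Hf s) : ℂ).re := by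
      have := hstep3
      rw [hfub, hfub2] at this
      rw [hstep1]
      linarith
    -- re ⟪ψ0, x⟫
    have hpsix : (inner ℂ (ψ 0) x : ℂ).re
        = ∫ s in (0:ℝ)..t, (inner ℂ (ψ 0) (Hf s) : ℂ).re := by
      have : (inner ℂ (ψ 0) x : ℂ) = inner ℂ (ψ 0) (∫ s in (0:ℝ)..t, Hf s) := by rw [hxI]
      rw [this, hre_comm (ψ 0) 0 t h0mem htmem]
    -- final combination
    have hpsi0_ii : IntervalIntegrable (fun s => (inner ℂ (ψ 0) (Hf s) : ℂ).re) volume 0 t :=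
      clm_intervalIntegrable Complex.reCLM (hinner_Hf_ii (ψ 0) 0 t h0mem htmem)
    have hsum0 : (∫ s in (0:ℝ)..t, (inner ℂ (ψ 0) (Hf s) : ℂ).re)
        + (∫ s in (0:ℝ)..t, (inner ℂ (ψ s - ψ 0) (Hf s) : ℂ).re) = 0 := by
      rw [← intervalIntegral.integral_add hpsi0_ii hG_int]
      have : (∫ s in (0:ℝ)..t,
          ((inner ℂ (ψ 0) (Hf s) : ℂ).re + (inner ℂ (ψ s - ψ 0) (Hf s) : ℂ).re))
          = ∫ s in (0:ℝ)..t, (0:ℝ) := by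
        refine intervalIntegral.integral_congr (fun s _ => ?_)
        have h10 : (inner ℂ (ψ 0) (Hf s) : ℂ).re + (inner ℂ (ψ s - ψ 0) (Hf s) : ℂ).re
            = (inner ℂ (ψ s) (Hf s) : ℂ).re := by
          rw [show (ψ s) = ψ 0 + (ψ s - ψ 0) by abel, inner_add_left]
          simp only [inner_sub_left, inner_add_left, Complex.add_re, Complex.sub_re]
          ring
        rw [h10, hre0 s]
      rw [this]
      simp
    have hpsit : ψ t = ψ 0 + x := by rw [hxdef]; abel
    have hsq : ‖ψ t‖ ^ 2 = ‖ψ 0‖ ^ 2 := by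
      rw [hpsit]
      have hns := norm_add_sq (𝕜 := ℂ) (ψ 0) x
      have hre1 : RCLike.re (inner ℂ (ψ 0) x : ℂ) = (inner ℂ (ψ 0) x : ℂ).re := rfl
      have hre2 : ‖x‖ ^ 2 = (inner ℂ x x : ℂ).re := by
        have := inner_self_eq_norm_sq (𝕜 := ℂ) x
        simpa using this.symm
      rw [hns, hre1, hre2, hxx, hpsix]
      linarith [hsum0]
    have := sq_eq_sq₀ (norm_nonneg (ψ t)) (norm_nonneg (ψ 0))
    exact this.1 hsq
  -- ===== overlap part =====
  set c : ℂ := Complex.I * (lam : ℂ) with hc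
  have hconj : (starRingEnd ℂ) c = -c := by
    rw [hc]
    simp [map_mul, Complex.conj_I, Complex.conj_ofReal]
  set f : ℝ → ℂ := fun t' => (inner ℂ φ (ψ t') : ℂ) with hfdef
  set m : ℝ → ℂ := fun s => (inner ℂ φ (B (ψ s)) : ℂ) with hmdef
  set w : ℝ → ℂ := fun s => (inner ℂ φ (Hf s) : ℂ) with hwdef
  set E : ℝ → ℂ := fun s => Complex.exp (c * s) with hEdef
  have hE_cont : Continuous E := Complex.continuous_exp.comp
    (continuous_const.mul Complex.continuous_ofReal)
  have hf_cont : Continuous f := continuous_const.inner hψ_cont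
  have hm_cont : Continuous m := continuous_const.inner hBψ_cont
  have h0T : (0:ℝ) ∈ Set.Icc (0:ℝ) T := ⟨le_refl 0, hT0⟩
  have hTT : T ∈ Set.Icc (0:ℝ) T := ⟨hT0, le_refl T⟩
  have hw_ii : ∀ a b : ℝ, a ∈ Set.Icc (0:ℝ) T → b ∈ Set.Icc (0:ℝ) T →
      IntervalIntegrable w volume a b := by
    intro a b ha hb
    have := clm_intervalIntegrable (innerSL ℂ φ) (hHf_ii a b ha hb)
    simpa [hwdef] using this
  have hf_eq : ∀ t' ∈ Set.Icc (0:ℝ) T, f t' = f 0 + ∫ s in (0:ℝ)..t', w s := by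
    intro t' ht'
    have h2 : (inner ℂ φ (∫ s in (0:ℝ)..t', Hf s) : ℂ) = ∫ s in (0:ℝ)..t', w s := by
      have := (innerSL ℂ φ).intervalIntegral_comp_comm (hHf_ii 0 t' h0T ht')
      simpa [hwdef] using this.symm
    show (inner ℂ φ (ψ t') : ℂ) = (inner ℂ φ (ψ 0) : ℂ) + _
    rw [hψ t' ht', inner_add_right, h2]
  have hw_eq : ∀ s : ℝ, w s = -c * f s + (u s : ℂ) * m s := by
    intro s
    show (inner ℂ φ (A (ψ s) + u s • B (ψ s)) : ℂ) = _
    rw [inner_add_right]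
    congr 1
    · have h1 := ContinuousLinearMap.adjoint_inner_left A (ψ s) φ
      rw [hA] at h1
      rw [← h1]
      have h2 : (-A) φ = c • φ := by
        rw [ContinuousLinearMap.neg_apply, hφ]
        simp
      rw [h2, inner_smul_left, hconj]
    · rw [RCLike.real_smul_eq_coe_smul (K := ℂ), inner_smul_right]
      norm_cast
  have hm_bound : ∀ s ∈ Set.Icc (0:ℝ) T, ‖m s‖ ≤ ‖B φ‖ := by
    intro s hs
    have h1 := ContinuousLinearMap.adjoint_inner_left B (ψ s) φ
    rw [hB] at h1
    have h2 : m s = - (inner ℂ (B φ) (ψ s) : ℂ) := by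
      show (inner ℂ φ (B (ψ s)) : ℂ) = _
      rw [← h1]
      simp [inner_neg_left]
    rw [h2, norm_neg]
    calc ‖(inner ℂ (B φ) (ψ s) : ℂ)‖ ≤ ‖B φ‖ * ‖ψ s‖ := norm_inner_le_norm _ _
      _ = ‖B φ‖ * ‖ψ 0‖ := by rw [hnorm s hs]
      _ ≤ ‖B φ‖ * 1 := mul_le_mul_of_nonneg_left hψ0 (norm_nonneg _)
      _ = ‖B φ‖ := mul_one _
  have hexp : ∀ s : ℝ, HasDerivAt E (c * E s) s := by
    intro s
    have h1 : HasDerivAt (fun y : ℝ => c * (y : ℂ)) c s := by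
      simpa using (Complex.ofRealCLM.hasDerivAt (x := s)).const_mul c
    simpa [hEdef, Function.comp_def, mul_comm] using (Complex.hasDerivAt_exp (c * s)).comp s h1
  have hExpInt : ∀ a b : ℝ, (∫ s in a..b, c * E s) = E b - E a := by
    intro a b
    exact intervalIntegral.integral_eq_sub_of_hasDerivAt (fun x _ => hexp x)
      ((continuous_const.mul hE_cont).intervalIntegrable a b)
  have hE0 : E 0 = 1 := by
    show Complex.exp (c * (0:ℝ)) = 1
    simp
  have habsE : ∀ s : ℝ, ‖E s‖ = 1 := by
    intro s
    show ‖Complex.exp (c * (s:ℝ))‖ = 1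
    rw [Complex.norm_exp]
    have h1 : (c * (s:ℝ)).re = 0 := by
      rw [hc]
      simp [Complex.mul_re]
    rw [h1, Real.exp_zero]
  have hw_iiT := hw_ii 0 T h0T hTT
  have hEw_ii : IntervalIntegrable (fun s => E s * w s) volume 0 T :=
    hw_iiT.continuousOn_mul hE_cont.continuousOn
  have hcEf_cont : Continuous fun s => c * E s * f s := (continuous_const.mul hE_cont).mul hf_cont
  have hu_ii : IntervalIntegrable u volume 0 T := by
    rw [intervalIntegrable_iff]
    exact hu.mono_set (by rw [Set.uIoc_of_le hT0]; exact Set.Ioc_subset_Icc_self)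
  have huC_ii : IntervalIntegrable (fun s => ((u s : ℝ) : ℂ)) volume 0 T :=
    clm_intervalIntegrable Complex.ofRealCLM hu_ii
  have hum_ii : IntervalIntegrable (fun s => ((u s : ℝ) : ℂ) * m s) volume 0 T :=
    huC_ii.mul_continuousOn hm_cont.continuousOn
  have hEum_ii : IntervalIntegrable (fun s => E s * (((u s : ℝ) : ℂ) * m s)) volume 0 T :=
    hum_ii.continuousOn_mul hE_cont.continuousOn
  have hJ : (∫ s in (0:ℝ)..T, w s) = f T - f 0 := by
    rw [hf_eq T hTT]; ring
  have hkey : E T * f T - f 0 = ∫ s in (0:ℝ)..T, E s * (((u s : ℝ) : ℂ) * m s) := by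
    have step1 : (∫ s in (0:ℝ)..T, E s * (((u s : ℝ) : ℂ) * m s))
        = ∫ s in (0:ℝ)..T, (E s * w s + c * E s * f s) := by
      refine intervalIntegral.integral_congr (fun s _ => ?_)
      rw [show (((u s : ℝ) : ℂ) * m s) = w s + c * f s by rw [hw_eq s]; ring]
      ring
    have step2 : (∫ s in (0:ℝ)..T, (E s * w s + c * E s * f s))
        = (∫ s in (0:ℝ)..T, E s * w s) + ∫ s in (0:ℝ)..T, c * E s * f s :=
      intervalIntegral.integral_add hEw_ii (hcEf_cont.intervalIntegrable 0 T)
    have step3 : (∫ s in (0:ℝ)..T, c * E s * f s)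
        = (∫ s in (0:ℝ)..T, c * E s * f 0)
          + ∫ s in (0:ℝ)..T, c * E s * (f s - f 0) := by
      rw [← intervalIntegral.integral_add (f := fun s => c * E s * f 0)
        (g := fun s => c * E s * (f s - f 0))
        (((continuous_const.mul hE_cont).mul continuous_const).intervalIntegrable 0 T)
        (((continuous_const.mul hE_cont).mul (hf_cont.sub continuous_const)).intervalIntegrable 0 T)]
      refine intervalIntegral.integral_congr (fun s _ => ?_)
      ring
    have step4 : (∫ s in (0:ℝ)..T, c * E s * f 0) = (E T - 1) * f 0 := by
      rw [intervalIntegral.integral_mul_const, hExpInt 0 T, hE0]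
    have step5 : (∫ s in (0:ℝ)..T, c * E s * (f s - f 0))
        = ∫ s in (0:ℝ)..T, ∫ r in (0:ℝ)..s, (c * E s) * w r := by
      refine intervalIntegral.integral_congr (fun s hs => ?_)
      rw [Set.uIcc_of_le hT0] at hs
      rw [intervalIntegral.integral_const_mul, hf_eq s hs]
      ring
    have step6 : (∫ s in (0:ℝ)..T, ∫ r in (0:ℝ)..s, (c * E s) * w r)
        = ∫ r in (0:ℝ)..T, ∫ s in r..T, (c * E s) * w r := by
      refine tri_swap hT0 ?_
      have h1 : Integrable (fun s => c * E s) (volume.restrict (Set.Ioc (0:ℝ) T)) :=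
        (continuous_const.mul hE_cont).integrableOn_Ioc
      have h2 : Integrable w (volume.restrict (Set.Ioc (0:ℝ) T)) := by
        have := hw_iiT
        rw [intervalIntegrable_iff, Set.uIoc_of_le hT0] at this
        exact this
      exact h1.mul_prod h2
    have step8 : (∫ r in (0:ℝ)..T, ∫ s in r..T, (c * E s) * w r)
        = ∫ r in (0:ℝ)..T, (E T * w r - E r * w r) := by
      refine intervalIntegral.integral_congr (fun r hr => ?_)
      rw [Set.uIcc_of_le hT0] at hr
      rw [intervalIntegral.integral_mul_const, hExpInt r T]
      ring
    have step9 : (∫ r in (0:ℝ)..T, (E T * w r - E r * w r))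
        = E T * (f T - f 0) - ∫ r in (0:ℝ)..T, E r * w r := by
      rw [intervalIntegral.integral_sub (hw_iiT.const_mul (E T)) hEw_ii,
        intervalIntegral.integral_const_mul, hJ]
    rw [step1, step2, step3, step4, step5, step6, step8, step9]
    ring
  -- final estimates
  have hbound : |‖f T‖ - ‖f 0‖|
      ≤ ‖B φ‖ * ∫ t' in (0:ℝ)..T, |u t'| := by
    have habs1 : ‖f T‖ = ‖E T * f T‖ := by
      rw [norm_mul, habsE T, one_mul]
    have h1 : |‖f T‖ - ‖f 0‖| ≤ ‖E T * f T - f 0‖ := by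
      rw [habs1]
      have := abs_norm_sub_norm_le (E T * f T) (f 0)
      simpa using this
    have h3 : ‖∫ s in (0:ℝ)..T, E s * (((u s : ℝ) : ℂ) * m s)‖
        ≤ ∫ s in (0:ℝ)..T, ‖E s * (((u s : ℝ) : ℂ) * m s)‖ :=
      intervalIntegral.norm_integral_le_integral_norm hT0
    have h4 : (∫ s in (0:ℝ)..T, ‖E s * (((u s : ℝ) : ℂ) * m s)‖)
        ≤ ∫ s in (0:ℝ)..T, ‖B φ‖ * |u s| := by
      refine intervalIntegral.integral_mono_on hT0 hEum_ii.norm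
        ((hu_ii.norm).const_mul ‖B φ‖) ?_
      intro s hs
      rw [norm_mul, norm_mul, habsE s, one_mul, Complex.norm_real, Real.norm_eq_abs]
      calc |u s| * ‖m s‖ ≤ |u s| * ‖B φ‖ :=
            mul_le_mul_of_nonneg_left (hm_bound s hs) (abs_nonneg _)
        _ = ‖B φ‖ * |u s| := mul_comm _ _
    have h5 : (∫ s in (0:ℝ)..T, ‖B φ‖ * |u s|) = ‖B φ‖ * ∫ s in (0:ℝ)..T, |u s| := by
      rw [intervalIntegral.integral_const_mul]
    have h2 : ‖E T * f T - f 0‖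
        = ‖∫ s in (0:ℝ)..T, E s * (((u s : ℝ) : ℂ) * m s)‖ := by
      rw [hkey]
    calc |‖f T‖ - ‖f 0‖|
        ≤ ‖E T * f T - f 0‖ := h1
      _ = ‖∫ s in (0:ℝ)..T, E s * (((u s : ℝ) : ℂ) * m s)‖ := h2
      _ ≤ ∫ s in (0:ℝ)..T, ‖E s * (((u s : ℝ) : ℂ) * m s)‖ := h3
      _ ≤ ∫ s in (0:ℝ)..T, ‖B φ‖ * |u s| := h4
      _ = ‖B φ‖ * ∫ s in (0:ℝ)..T, |u s| := h5
  constructor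
  · exact hbound
  · intro hBφ
    have hpos : 0 < ‖B φ‖ := norm_pos_iff.2 hBφ
    rw [div_le_iff₀ hpos]
    have h6 : |‖f 0‖ - ‖f T‖|
        = |‖f T‖ - ‖f 0‖| := abs_sub_comm _ _
    show |‖f 0‖ - ‖f T‖| ≤ _
    rw [h6]
    calc |‖f T‖ - ‖f 0‖|
        ≤ ‖B φ‖ * ∫ t' in (0:ℝ)..T, |u t'| := hbound
      _ = (∫ t' in (0:ℝ)..T, |u t'|) * ‖B φ‖ := mul_comm _ _
end

section
/- Let T > 0, let u : ℝ → ℝ be nonnegative and integrable on [0,T] with ∫₀ᵀ u(t) dt < π, and let f : ℝ → ℝ be differentiable on [0,T] with 0 ≤ f(t) ≤ 1 for all t ∈ [0,T], f(0) = 1, and |f′(t)| ≤ u(t) · √(f(t)·(1 − f(t))) for all t ∈ [0,T]. Then f(T) ≥ cos²( (∫₀ᵀ u(t) dt) / 2 ). -/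
open MeasureTheory intervalIntegral Real

open Set Filter Topology in
set_option maxHeartbeats 2000000 in
/-- Gronwall-type comparison lemma bounding population transfer: if
`|f'| ≤ u √(f(1−f))`, `f(0) = 1` and `∫₀ᵀ u < π`, then
`f(T) ≥ cos²((∫₀ᵀ u)/2)`. -/
theorem population_comparison_lemma
    (T : ℝ) (hT : 0 < T)
    (u : ℝ → ℝ) (hu_nonneg : ∀ t ∈ Set.Icc (0 : ℝ) T, 0 ≤ u t)
    (hu_int : IntegrableOn u (Set.Icc 0 T))
    (hu_pi : (∫ t in (0 : ℝ)..T, u t) < π)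
    (f f' : ℝ → ℝ)
    (hf_deriv : ∀ t ∈ Set.Icc (0 : ℝ) T, HasDerivAt f (f' t) t)
    (hf_mem : ∀ t ∈ Set.Icc (0 : ℝ) T, 0 ≤ f t ∧ f t ≤ 1)
    (hf0 : f 0 = 1)
    (hf'_le : ∀ t ∈ Set.Icc (0 : ℝ) T, |f' t| ≤ u t * Real.sqrt (f t * (1 - f t))) :
    Real.cos ((∫ t in (0 : ℝ)..T, u t) / 2) ^ 2 ≤ f T := by
  have hπ := Real.pi_pos
  set K : ℝ := ∫ t in (0 : ℝ)..T, u t with hKdef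
  have hK0 : 0 ≤ K := intervalIntegral.integral_nonneg hT.le hu_nonneg
  -- the key quantitative claim, for every small `η > 0`
  have key : ∀ η : ℝ, 0 < η → K / 2 + η < π / 2 → Real.cos (K / 2 + η) ^ 2 ≤ f T := by
    intro η hη hηπ
    -- Vitali–Carathéodory: a lower semicontinuous majorant of `u`
    obtain ⟨g, hg_lt, hg_lsc, hg_int, hg_top, hg_sum⟩ :=
      exists_lt_lowerSemicontinuous_integral_lt (μ := volume.restrict (Set.Icc (0 : ℝ) T))
        u hu_int hη
    set w : ℝ → ℝ := fun x => (g x).toReal ⊔ 0 with hw_def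
    have hw0 : ∀ x, 0 ≤ w x := fun x => le_max_right _ _
    have hw_int : IntegrableOn w (Set.Icc 0 T) := hg_int.pos_part
    have hK_eq : (∫ x, u x ∂(volume.restrict (Set.Icc (0 : ℝ) T))) = K := by
      rw [hKdef, intervalIntegral.integral_of_le hT.le, ← integral_Icc_eq_integral_Ioc]
    -- `w` agrees a.e. with `toReal ∘ g` on `[0, T]`
    have hw_ae : w =ᵐ[volume.restrict (Set.Icc (0 : ℝ) T)] fun x => (g x).toReal := by
      filter_upwards [hg_top, ae_restrict_mem measurableSet_Icc] with x hx1 hx2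
      have h0 : ((0 : ℝ) : EReal) ≤ g x :=
        le_of_lt (lt_of_le_of_lt (by exact_mod_cast hu_nonneg x hx2) (hg_lt x))
      have h0' : (0 : ℝ) ≤ (g x).toReal := by
        have := EReal.toReal_le_toReal h0 (by simp) hx1.ne
        simpa using this
      simp [hw_def, max_eq_left h0']
    have hw_sum : (∫ x, w x ∂(volume.restrict (Set.Icc (0 : ℝ) T))) < K + η := by
      rw [integral_congr_ae hw_ae]
      calc (∫ x, (g x).toReal ∂(volume.restrict (Set.Icc (0 : ℝ) T)))
          < (∫ x, u x ∂(volume.restrict (Set.Icc (0 : ℝ) T))) + η := hg_sum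
        _ = K + η := by rw [hK_eq]
    -- the primitive of `w`
    set V : ℝ → ℝ := fun t => ∫ s in (0 : ℝ)..t, w s with hV_def
    have hIcc_eq : Set.uIcc (0 : ℝ) T = Set.Icc 0 T := Set.uIcc_of_le hT.le
    have hw_ii : ∀ a ∈ Set.Icc (0 : ℝ) T, ∀ b ∈ Set.Icc (0 : ℝ) T,
        IntervalIntegrable w volume a b := by
      intro a ha b hb
      apply IntegrableOn.intervalIntegrable
      apply hw_int.mono_set
      rw [← hIcc_eq]
      exact Set.uIcc_subset_uIcc (by rwa [hIcc_eq]) (by rwa [hIcc_eq])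
    have hV_cont : ContinuousOn V (Set.Icc 0 T) := by
      rw [← hIcc_eq]
      exact intervalIntegral.continuousOn_primitive_interval (by rwa [hIcc_eq])
    have hV_sub : ∀ a ∈ Set.Icc (0 : ℝ) T, ∀ b ∈ Set.Icc (0 : ℝ) T,
        V b - V a = ∫ s in a..b, w s := by
      intro a ha b hb
      have := intervalIntegral.integral_add_adjacent_intervals
        (hw_ii 0 (Set.left_mem_Icc.2 hT.le) a ha) (hw_ii a ha b hb)
      simp only [hV_def]
      linarith [this]
    have hV_mono : ∀ a ∈ Set.Icc (0 : ℝ) T, ∀ b ∈ Set.Icc (0 : ℝ) T, a ≤ b → V a ≤ V b := by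
      intro a ha b hb hab
      have h1 : 0 ≤ ∫ s in a..b, w s :=
        intervalIntegral.integral_nonneg hab fun x _ => hw0 x
      have := hV_sub a ha b hb
      linarith
    have hV0 : V 0 = 0 := intervalIntegral.integral_same
    have hV_nonneg : ∀ t ∈ Set.Icc (0 : ℝ) T, 0 ≤ V t := by
      intro t ht
      have := hV_mono 0 (Set.left_mem_Icc.2 hT.le) t ht ht.1
      linarith [hV0]
    have hVT : V T < K + η := by
      have : V T = ∫ x, w x ∂(volume.restrict (Set.Icc (0 : ℝ) T)) := by
        rw [show V T = ∫ s in (0 : ℝ)..T, w s from rfl,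
          intervalIntegral.integral_of_le hT.le, ← integral_Icc_eq_integral_Ioc]
      rw [this]; exact hw_sum
    -- the tilted angle function
    have h1T : (0 : ℝ) < 1 + T := by linarith
    set ε : ℝ := η / (2 * (1 + T)) with hε_def
    have hε : 0 < ε := by positivity
    have hεT : ε * (1 + T) = η / 2 := by
      field_simp [hε_def]
      have h2 : ε * (2 * (1 + T)) = η := by rw [hε_def]; exact div_mul_cancel₀ _ (by positivity)
      linear_combination h2
    set θ : ℝ → ℝ := fun t => ε * (1 + t) + V t / 2 with hθ_def
    have hθ_cont : ContinuousOn θ (Set.Icc 0 T) :=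
      ((continuous_const.mul (continuous_const.add continuous_id)).continuousOn).add
        (hV_cont.div_const 2)
    have hθ_mono : ∀ a ∈ Set.Icc (0 : ℝ) T, ∀ b ∈ Set.Icc (0 : ℝ) T, a ≤ b → θ a ≤ θ b := by
      intro a ha b hb hab
      have h1 := hV_mono a ha b hb hab
      simp only [hθ_def]
      nlinarith
    have hθ_pos : ∀ t ∈ Set.Icc (0 : ℝ) T, 0 < θ t := by
      intro t ht
      have h1 := hV_nonneg t ht
      have h2 : (0:ℝ) ≤ t := ht.1
      simp only [hθ_def]
      nlinarith
    have hθT_lt : θ T < K / 2 + η := by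
      simp only [hθ_def]
      rw [hεT]
      linarith
    have hθ_lt : ∀ t ∈ Set.Icc (0 : ℝ) T, θ t < π / 2 := by
      intro t ht
      exact lt_of_le_of_lt (hθ_mono t ht T (Set.right_mem_Icc.2 hT.le) ht.2)
        (lt_trans hθT_lt hηπ)
    -- a real number strictly between `u x` and `g x` at every point
    have hex : ∀ x : ℝ, ∃ r : ℝ, u x < r ∧ (r : EReal) < g x := by
      intro x
      rcases EReal.lt_iff_exists_real_btwn.1 (hg_lt x) with ⟨r, h1, h2⟩
      exact ⟨r, by exact_mod_cast h1, h2⟩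
    choose b hb1 hb2 using hex
    have hw_ge : ∀ y, (g y).toReal ≤ w y := fun y => le_max_left _ _
    clear_value θ
    clear_value ε
    clear_value V
    clear_value w
    -- the comparison lemma
    have main : ∀ ⦃x⦄, x ∈ Set.Icc (0 : ℝ) T →
        (fun t => Real.cos (θ t) ^ 2) x ≤ f x := by
      refine image_le_of_liminf_slope_right_lt_deriv_boundary'
        (f' := fun x => -(ε + b x / 2) * Real.sin (2 * θ x)) (B' := f')
        ?_ ?_ ?_ ?_ ?_ ?_
      · exact (Real.continuous_cos.comp_continuousOn hθ_cont).pow 2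
      · -- the liminf slope estimate for the barrier
        intro x hx r hr
        have hxI : x ∈ Set.Icc (0 : ℝ) T := Set.Ico_subset_Icc_self hx
        have hbx0 : 0 ≤ b x := ((hu_nonneg x hxI).trans_lt (hb1 x)).le
        set c : ℝ := ε + b x / 2 with hc_def
        clear_value c
        have hc : 0 < c := by rw [hc_def]; linarith
        have hθx_pos := hθ_pos x hxI
        have hθx_lt := hθ_lt x hxI
        -- lower semicontinuity neighborhood
        have hnb : ∀ᶠ z in 𝓝 x, (b x : EReal) < g z := hg_lsc x _ (hb2 x)
        rcases Metric.eventually_nhds_iff.1 hnb with ⟨δ, hδpos, hδ⟩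
        have E1 : ∀ᶠ z in 𝓝[>] x, z ∈ Set.Ioc x T := Ioc_mem_nhdsGT_of_mem ⟨le_rfl, hx.2⟩
        have E2 : ∀ᶠ z in 𝓝[>] x, dist z x < δ :=
          eventually_nhdsWithin_of_eventually_nhds (Metric.eventually_nhds_iff.2
            ⟨δ, hδpos, fun {y} hy => hy⟩)
        -- convergence of the comparison quotient
        have tθ : Tendsto θ (𝓝[>] x) (𝓝 (θ x)) := by
          rw [← nhdsWithin_Ioc_eq_nhdsGT hx.2]
          exact (hθ_cont x hxI).mono fun z hz => ⟨le_trans hxI.1 hz.1.le, hz.2⟩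
        have t1 : Tendsto (fun z => θ z + θ x) (𝓝[>] x) (𝓝 (2 * θ x)) := by
          have := tθ.add (tendsto_const_nhds (x := θ x))
          rwa [show θ x + θ x = 2 * θ x by ring] at this
        have t2 : Tendsto (fun z => Real.sin (c * (z - x)) / (z - x)) (𝓝[>] x) (𝓝 c) := by
          have hd : HasDerivAt (fun z : ℝ => Real.sin (c * (z - x))) c x := by
            have h1 : HasDerivAt (fun z : ℝ => c * (z - x)) c x := by
              simpa using ((hasDerivAt_id x).sub_const x).const_mul c
            have h2 := (Real.hasDerivAt_sin (c * (x - x))).comp x h1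
            simpa [Function.comp_def] using h2
          have h3 := hasDerivAt_iff_tendsto_slope.1 hd
          have h4 : Tendsto (slope (fun z : ℝ => Real.sin (c * (z - x))) x) (𝓝[>] x) (𝓝 c) :=
            h3.mono_left (nhdsWithin_mono x fun z hz => ne_of_gt hz)
          apply h4.congr'
          filter_upwards [self_mem_nhdsWithin] with z hz
          rw [slope_def_field]
          simp
        have tG : Tendsto (fun z => -Real.sin (θ z + θ x) * (Real.sin (c * (z - x)) / (z - x)))
            (𝓝[>] x) (𝓝 (-(ε + b x / 2) * Real.sin (2 * θ x))) := by
          have := ((Real.continuous_sin.continuousAt.tendsto.comp t1).neg).mul t2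
          rwa [show -Real.sin (2 * θ x) * c = -(ε + b x / 2) * Real.sin (2 * θ x) by
            rw [hc_def]; ring] at this
        have Gev : ∀ᶠ z in 𝓝[>] x,
            -Real.sin (θ z + θ x) * (Real.sin (c * (z - x)) / (z - x)) < r :=
          tG.eventually_lt_const (by rwa [hc_def] at hr)
        refine ((E1.and (E2.and Gev)).mono ?_).frequently
        rintro z ⟨hz1, hz2, hz3⟩
        have hxz : x < z := hz1.1
        have hzI : z ∈ Set.Icc (0 : ℝ) T := ⟨le_trans hxI.1 hxz.le, hz1.2⟩
        -- integral lower bound from lower semicontinuity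
        have hVlb : b x * (z - x) ≤ V z - V x := by
          rw [hV_sub x hxI z hzI]
          have h1 : (∫ s in x..z, b x) ≤ ∫ s in x..z, w s := by
            apply intervalIntegral.integral_mono_ae_restrict hxz.le
              (intervalIntegrable_const) (hw_ii x hxI z hzI)
            have hae : ∀ᵐ y ∂(volume.restrict (Set.Icc x z)), g y < ⊤ :=
              ae_restrict_of_ae_restrict_of_subset
                (Set.Icc_subset_Icc hxI.1 hzI.2) hg_top
            filter_upwards [hae, ae_restrict_mem measurableSet_Icc] with y hy1 hy2
            have hdist : dist y x < δ := by
              rw [Real.dist_eq, abs_of_nonneg (by linarith [hy2.1])]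
              have := hy2.2
              calc y - x ≤ z - x := by linarith
                _ = dist z x := by rw [Real.dist_eq, abs_of_nonneg (by linarith)]
                _ < δ := hz2
            have hgy : (b x : EReal) < g y := hδ hdist
            have : b x ≤ (g y).toReal := by
              have := EReal.toReal_le_toReal hgy.le (by simp) hy1.ne
              simpa using this
            exact le_trans this (hw_ge y)
          rwa [intervalIntegral.integral_const, smul_eq_mul, mul_comm] at h1
        -- angle estimates
        have hθz_pos := hθ_pos z hzI
        have hθz_lt := hθ_lt z hzI
        have hΔlb : c * (z - x) ≤ θ z - θ x := by
          simp only [hθ_def, hc_def]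
          nlinarith
        have hΔub : θ z - θ x ≤ π / 2 := by linarith
        have hch0 : 0 ≤ c * (z - x) := mul_nonneg hc.le (by linarith)
        have hsin1 : Real.sin (c * (z - x)) ≤ Real.sin (θ z - θ x) :=
          Real.strictMonoOn_sin.monotoneOn ⟨by linarith, by linarith⟩
            ⟨by linarith, hΔub⟩ hΔlb
        have hsin2 : 0 ≤ Real.sin (θ z + θ x) :=
          Real.sin_nonneg_of_nonneg_of_le_pi (by linarith) (by linarith)
        have hBar_eq : Real.cos (θ z) ^ 2 - Real.cos (θ x) ^ 2
            = -(Real.sin (θ z + θ x) * Real.sin (θ z - θ x)) := by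
          rw [Real.cos_sq, Real.cos_sq, show (1 / 2 + Real.cos (2 * θ z) / 2)
            - (1 / 2 + Real.cos (2 * θ x) / 2) = (Real.cos (2 * θ z) - Real.cos (2 * θ x)) / 2
            by ring, Real.cos_sub_cos,
            show (2 * θ z + 2 * θ x) / 2 = θ z + θ x by ring,
            show (2 * θ z - 2 * θ x) / 2 = θ z - θ x by ring]
          ring
        have hnum : Real.cos (θ z) ^ 2 - Real.cos (θ x) ^ 2
            ≤ -(Real.sin (θ z + θ x) * Real.sin (c * (z - x))) := by
          rw [hBar_eq]
          nlinarith [mul_le_mul_of_nonneg_left hsin1 hsin2]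
        have hslope_le : slope (fun t => Real.cos (θ t) ^ 2) x z
            ≤ -Real.sin (θ z + θ x) * (Real.sin (c * (z - x)) / (z - x)) := by
          rw [slope_def_field, show -Real.sin (θ z + θ x) * (Real.sin (c * (z - x)) / (z - x))
            = (-(Real.sin (θ z + θ x) * Real.sin (c * (z - x)))) / (z - x) by ring]
          exact (div_le_div_iff_of_pos_right (show (0:ℝ) < z - x by linarith)).2 hnum
        exact lt_of_le_of_lt hslope_le hz3
      · -- initial condition
        rw [hf0]
        have h1 : |Real.cos (θ 0)| ≤ 1 := Real.abs_cos_le_one _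
        calc Real.cos (θ 0) ^ 2 = |Real.cos (θ 0)| ^ 2 := (sq_abs _).symm
          _ ≤ 1 := by nlinarith [abs_nonneg (Real.cos (θ 0))]
      · exact fun t ht => (hf_deriv t ht).continuousAt.continuousWithinAt
      · exact fun x hx => (hf_deriv x (Set.Ico_subset_Icc_self hx)).hasDerivWithinAt
      · -- strict inequality at contact points
        intro x hx hBf
        have hxI : x ∈ Set.Icc (0 : ℝ) T := Set.Ico_subset_Icc_self hx
        have hθx_pos := hθ_pos x hxI
        have hθx_lt := hθ_lt x hxI
        have hsin_pos : 0 < Real.sin (2 * θ x) :=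
          Real.sin_pos_of_pos_of_lt_pi (by linarith) (by linarith)
        have hcos_nonneg : 0 ≤ Real.cos (θ x) :=
          Real.cos_nonneg_of_mem_Icc ⟨by linarith, by linarith⟩
        have hsin_nonneg : 0 ≤ Real.sin (θ x) :=
          Real.sin_nonneg_of_nonneg_of_le_pi (by linarith) (by linarith)
        have hfx : f x = Real.cos (θ x) ^ 2 := hBf.symm
        have h1mf : 1 - f x = Real.sin (θ x) ^ 2 := by
          have := Real.sin_sq_add_cos_sq (θ x)
          rw [hfx]; linarith
        have hprod : f x * (1 - f x) = (Real.cos (θ x) * Real.sin (θ x)) ^ 2 := by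
          rw [h1mf, hfx]; ring
        have hsqrt : Real.sqrt (f x * (1 - f x)) = Real.sin (2 * θ x) / 2 := by
          rw [hprod, Real.sqrt_sq (mul_nonneg hcos_nonneg hsin_nonneg), Real.sin_two_mul]
          ring
        have habs := hf'_le x hxI
        rw [hsqrt] at habs
        have hlb : -(u x * (Real.sin (2 * θ x) / 2)) ≤ f' x := by
          have := neg_abs_le (f' x)
          linarith [(abs_le.1 habs).1]
        have hub : u x < b x := hb1 x
        nlinarith
    -- conclude at `t = T`
    have hmainT := main (Set.right_mem_Icc.2 hT.le)
    have hθT_pos := hθ_pos T (Set.right_mem_Icc.2 hT.le)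
    have hcos_le : Real.cos (K / 2 + η) ≤ Real.cos (θ T) :=
      Real.cos_le_cos_of_nonneg_of_le_pi hθT_pos.le (by linarith) hθT_lt.le
    have hcos_nonneg : 0 ≤ Real.cos (K / 2 + η) :=
      Real.cos_nonneg_of_mem_Icc ⟨by linarith, hηπ.le⟩
    calc Real.cos (K / 2 + η) ^ 2 ≤ Real.cos (θ T) ^ 2 := by nlinarith
      _ ≤ f T := hmainT
  -- take the limit `η → 0⁺`
  have hne : (𝓝[>] (0 : ℝ)).NeBot := inferInstance
  have tends : Tendsto (fun η : ℝ => Real.cos (K / 2 + η) ^ 2) (𝓝[>] (0 : ℝ))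
      (𝓝 (Real.cos (K / 2) ^ 2)) := by
    have hc : Continuous fun η : ℝ => Real.cos (K / 2 + η) ^ 2 :=
      (Real.continuous_cos.comp (continuous_const.add continuous_id)).pow 2
    have h2 := (hc.tendsto (0 : ℝ)).mono_left (nhdsWithin_le_nhds (s := Set.Ioi (0 : ℝ)))
    simpa using h2
  refine le_of_tendsto tends ?_
  have hpos : 0 < π / 2 - K / 2 := by linarith
  filter_upwards [Ioo_mem_nhdsGT_of_mem ⟨le_rfl, hpos⟩] with η hη
  exact key η hη.1 (by linarith [hη.2])
end

section
/- Let T > 0, let u : ℝ → ℝ be integrable on [0,T] with ∫₀ᵀ |u(t)| dt < π, and let x₁, x₂ : ℝ → ℂ be continuous functions satisfying, for all t ∈ [0,T], x₁(t) = x₁(0) + ∫₀ᵗ (−i·x₁(s) − (i/2)·u(s)·x₂(s)) ds and x₂(t) = x₂(0) + ∫₀ᵗ (−4i·x₂(s) − (i/2)·u(s)·x₁(s)) ds, with initial condition x₁(0) = 1, x₂(0) = 0. Then |x₁(T)| ≥ cos( (∫₀ᵀ |u|) / 2 ) and |x₂(T)| ≤ sin( (∫₀ᵀ |u|) / 2 ).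 -/
section helpers
open MeasureTheory Set Real

private lemma fubini_key (t : ℝ) (f g : ℝ → ℂ)
    (hf : IntegrableOn f (Ioc 0 t)) (hg : IntegrableOn g (Ioc 0 t)) :
    IntegrableOn (fun s => (∫ r in Ioc 0 s, f r) * g s
        + f s * (∫ r in Ioc 0 s, g r)) (Ioc 0 t)
    ∧ (∫ s in Ioc 0 t, f s) * (∫ s in Ioc 0 t, g s)
      = ∫ s in Ioc 0 t, ((∫ r in Ioc 0 s, f r) * g s
          + f s * (∫ r in Ioc 0 s, g r)) := by
  set μ := volume.restrict (Ioc (0:ℝ) t) with hμ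
  have hH : Integrable (fun p : ℝ × ℝ => f p.1 * g p.2) (μ.prod μ) := hf.mul_prod hg
  set A : Set (ℝ × ℝ) := {p | p.1 ≤ p.2} with hAdef
  have hA : MeasurableSet A := measurableSet_le measurable_fst measurable_snd
  have hIA : Integrable (A.indicator fun p : ℝ × ℝ => f p.1 * g p.2) (μ.prod μ) :=
    hH.indicator hA
  have hIAc : Integrable (Aᶜ.indicator fun p : ℝ × ℝ => f p.1 * g p.2) (μ.prod μ) :=
    hH.indicator hA.compl
  -- inner computation for the A part (outer variable r, inner s)
  have hinner₁ : ∀ᵐ r ∂μ, (∫ s, A.indicator (fun p : ℝ × ℝ => f p.1 * g p.2) (s, r) ∂μ)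
      = (∫ x in Ioc 0 r, f x) * g r := by
    filter_upwards [ae_restrict_mem measurableSet_Ioc] with r hr
    have h1 : (fun s => A.indicator (fun p : ℝ × ℝ => f p.1 * g p.2) (s, r))
        = (Iic r).indicator (fun s => f s * g r) := by
      ext s
      by_cases h : s ≤ r <;> simp [Set.indicator_apply, hAdef, h]
    rw [h1, integral_indicator measurableSet_Iic, hμ,
      Measure.restrict_restrict measurableSet_Iic]
    have h2 : Iic r ∩ Ioc 0 t = Ioc 0 r := by
      ext x
      simp only [mem_inter_iff, mem_Iic, mem_Ioc]
      exact ⟨fun ⟨h1, h2, h3⟩ => ⟨h2, h1⟩, fun ⟨h1, h2⟩ => ⟨h2, h1, h2.trans hr.2⟩⟩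
    rw [h2, integral_mul_const]
  -- inner computation for the Aᶜ part (outer variable s, inner r)
  have hinner₂ : ∀ᵐ s ∂μ, (∫ r, Aᶜ.indicator (fun p : ℝ × ℝ => f p.1 * g p.2) (s, r) ∂μ)
      = f s * (∫ x in Ioc 0 s, g x) := by
    filter_upwards [ae_restrict_mem measurableSet_Ioc] with s hs
    have h1 : (fun r => Aᶜ.indicator (fun p : ℝ × ℝ => f p.1 * g p.2) (s, r))
        = (Iio s).indicator (fun r => f s * g r) := by
      ext r
      by_cases h : s ≤ r
      · rw [Set.indicator_of_notMem (by simp [hAdef, h]),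
          Set.indicator_of_notMem (by simp [not_lt.2 h])]
      · rw [Set.indicator_of_mem (by simp [hAdef, h]),
          Set.indicator_of_mem (by simp [not_le.1 h])]
    rw [h1, integral_indicator measurableSet_Iio, hμ,
      Measure.restrict_restrict measurableSet_Iio]
    have h2 : Iio s ∩ Ioc 0 t = Ioo 0 s := by
      ext x
      simp only [mem_inter_iff, mem_Iio, mem_Ioc, mem_Ioo]
      exact ⟨fun ⟨h1, h2, h3⟩ => ⟨h2, h1⟩, fun ⟨h1, h2⟩ => ⟨h2, h1, (le_of_lt h2).trans hs.2⟩⟩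
    rw [h2, integral_const_mul, ← integral_Ioc_eq_integral_Ioo]
  have hF₁ : Integrable (fun r => ∫ s, A.indicator (fun p : ℝ × ℝ => f p.1 * g p.2) (s, r) ∂μ) μ :=
    hIA.integral_prod_right
  have hF₂ : Integrable (fun s => ∫ r, Aᶜ.indicator (fun p : ℝ × ℝ => f p.1 * g p.2) (s, r) ∂μ) μ :=
    hIAc.integral_prod_left
  have hint : IntegrableOn (fun s => (∫ r in Ioc 0 s, f r) * g s
      + f s * (∫ r in Ioc 0 s, g r)) (Ioc 0 t) := by
    refine (hF₁.add hF₂).congr ?_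
    filter_upwards [hinner₁, hinner₂] with s h1 h2
    simp only [Pi.add_apply]
    rw [h1, h2]
  refine ⟨hint, ?_⟩
  have e1 : (∫ s in Ioc 0 t, f s) * (∫ s in Ioc 0 t, g s)
      = ∫ p, f p.1 * g p.2 ∂(μ.prod μ) := (integral_prod_mul f g).symm
  have e2 : ∫ p, f p.1 * g p.2 ∂(μ.prod μ)
      = (∫ p, A.indicator (fun p : ℝ × ℝ => f p.1 * g p.2) p ∂(μ.prod μ))
        + ∫ p, Aᶜ.indicator (fun p : ℝ × ℝ => f p.1 * g p.2) p ∂(μ.prod μ) := by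
    rw [← integral_add hIA hIAc]
    congr 1
    funext p
    exact (Set.indicator_self_add_compl_apply A (fun p : ℝ × ℝ => f p.1 * g p.2) p).symm
  have e3 : (∫ p, A.indicator (fun p : ℝ × ℝ => f p.1 * g p.2) p ∂(μ.prod μ))
      = ∫ r, (∫ x in Ioc 0 r, f x) * g r ∂μ := by
    rw [integral_prod_symm _ hIA]
    exact integral_congr_ae hinner₁
  have e4 : (∫ p, Aᶜ.indicator (fun p : ℝ × ℝ => f p.1 * g p.2) p ∂(μ.prod μ))
      = ∫ s, f s * (∫ x in Ioc 0 s, g x) ∂μ := by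
    rw [integral_prod _ hIAc]
    exact integral_congr_ae hinner₂
  rw [e1, e2, e3, e4, hμ]
  exact (integral_add (by exact hF₁.congr hinner₁) (by exact hF₂.congr hinner₂)).symm

private lemma prodRule (T : ℝ) (f g F G : ℝ → ℂ)
    (hf : IntegrableOn f (Icc 0 T)) (hg : IntegrableOn g (Icc 0 T))
    (hF : ∀ t ∈ Icc 0 T, F t = F 0 + ∫ s in (0:ℝ)..t, f s)
    (hG : ∀ t ∈ Icc 0 T, G t = G 0 + ∫ s in (0:ℝ)..t, g s) :
    ∀ t ∈ Icc 0 T, F t * G t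
      = F 0 * G 0 + ∫ s in (0:ℝ)..t, (F s * g s + f s * G s) := by
  intro t ht
  obtain ⟨ht0, htT⟩ := ht
  have hsub : Ioc (0:ℝ) t ⊆ Icc 0 T := fun x hx => ⟨le_of_lt hx.1, hx.2.trans htT⟩
  have hf' : IntegrableOn f (Ioc 0 t) := hf.mono_set hsub
  have hg' : IntegrableOn g (Ioc 0 t) := hg.mono_set hsub
  obtain ⟨hint, hkey⟩ := fubini_key t f g hf' hg'
  have congr1 : ∀ᵐ s ∂(volume.restrict (Ioc 0 t)),
      F s * g s + f s * G s
      = (F 0 * g s + f s * G 0)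
        + ((∫ r in Ioc 0 s, f r) * g s + f s * (∫ r in Ioc 0 s, g r)) := by
    filter_upwards [ae_restrict_mem measurableSet_Ioc] with s hs
    rw [hF s ⟨le_of_lt hs.1, hs.2.trans htT⟩, hG s ⟨le_of_lt hs.1, hs.2.trans htT⟩,
      intervalIntegral.integral_of_le (le_of_lt hs.1),
      intervalIntegral.integral_of_le (le_of_lt hs.1)]
    ring
  have hint0 : IntegrableOn (fun s => F 0 * g s + f s * G 0) (Ioc 0 t) :=
    (hg'.const_mul _).add (hf'.mul_const _)
  calc F t * G t = (F 0 + ∫ r in Ioc 0 t, f r) * (G 0 + ∫ r in Ioc 0 t, g r) := by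
        rw [hF t ⟨ht0, htT⟩, hG t ⟨ht0, htT⟩, intervalIntegral.integral_of_le ht0,
          intervalIntegral.integral_of_le ht0]
    _ = F 0 * G 0 + ((F 0 * (∫ r in Ioc 0 t, g r) + (∫ r in Ioc 0 t, f r) * G 0)
          + (∫ r in Ioc 0 t, f r) * (∫ r in Ioc 0 t, g r)) := by ring
    _ = F 0 * G 0 + ((∫ s in Ioc 0 t, (F 0 * g s + f s * G 0))
          + ∫ s in Ioc 0 t, ((∫ r in Ioc 0 s, f r) * g s
              + f s * (∫ r in Ioc 0 s, g r))) := by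
        rw [integral_add (hg'.const_mul _) (hf'.mul_const _), integral_const_mul,
          integral_mul_const, hkey]
    _ = F 0 * G 0 + ∫ s in Ioc 0 t, ((F 0 * g s + f s * G 0)
          + ((∫ r in Ioc 0 s, f r) * g s + f s * (∫ r in Ioc 0 s, g r))) := by
        rw [integral_add hint0 hint]
    _ = F 0 * G 0 + ∫ s in (0:ℝ)..t, (F s * g s + f s * G s) := by
        rw [intervalIntegral.integral_of_le ht0]
        exact congrArg _ (integral_congr_ae congr1).symm

private lemma sin_ge_mul_cos {θ : ℝ} (h0 : 0 ≤ θ) (h2 : θ ≤ π/2) :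
    θ * Real.cos θ ≤ Real.sin θ := by
  rcases eq_or_lt_of_le h0 with h | h
  · simp [← h]
  rcases eq_or_lt_of_le h2 with h' | h'
  · rw [h']; simp [Real.cos_pi_div_two, Real.sin_pi_div_two]
  · have ht := Real.lt_tan h h'
    have hc : 0 < Real.cos θ := Real.cos_pos_of_mem_Ioo ⟨by linarith [Real.pi_pos], h'⟩
    rw [Real.tan_eq_sin_div_cos] at ht
    have := mul_le_mul_of_nonneg_right ht.le hc.le
    rwa [div_mul_cancel₀ _ (ne_of_gt hc)] at this

private lemma sin_add_le_aux {x η : ℝ} (hx : 0 ≤ x) (hη : 0 ≤ η) (hxη : x + η ≤ π/2) :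
    Real.sin x + η * Real.cos (x + η) ≤ Real.sin (x + η) := by
  have h1 : Real.sin (x + η) - Real.sin x = 2 * Real.sin (η/2) * Real.cos (x + η/2) := by
    rw [Real.sin_sub_sin, show (x + η - x)/2 = η/2 by ring, show (x + η + x)/2 = x + η/2 by ring]
  have h2 : η/2 * Real.cos (η/2) ≤ Real.sin (η/2) :=
    sin_ge_mul_cos (by linarith) (by linarith [Real.pi_pos])
  have hs1 : 0 ≤ Real.sin (η/2) :=
    Real.sin_nonneg_of_nonneg_of_le_pi (by linarith) (by linarith [Real.pi_pos])
  have hs2 : 0 ≤ Real.sin (x + η/2) :=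
    Real.sin_nonneg_of_nonneg_of_le_pi (by linarith) (by linarith [Real.pi_pos])
  have h4 : 0 ≤ Real.cos (x + η/2) :=
    Real.cos_nonneg_of_mem_Icc ⟨by linarith [Real.pi_pos], by linarith⟩
  have h3 : Real.cos (x + η) ≤ Real.cos (η/2) * Real.cos (x + η/2) := by
    have hca := Real.cos_add (η/2) (x + η/2)
    have harg : η/2 + (x + η/2) = x + η := by ring
    rw [harg] at hca
    nlinarith [mul_nonneg hs1 hs2]
  have h5 : η * Real.cos (x + η) ≤ η * (Real.cos (η/2) * Real.cos (x + η/2)) :=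
    mul_le_mul_of_nonneg_left h3 hη
  have h6 : (η/2 * Real.cos (η/2)) * Real.cos (x + η/2)
      ≤ Real.sin (η/2) * Real.cos (x + η/2) :=
    mul_le_mul_of_nonneg_right h2 h4
  nlinarith [h1, h5, h6]

private lemma sin_add_ge_aux {β δ : ℝ} (hδ : 0 ≤ δ) (hδ1 : δ ≤ 1) :
    Real.sin β + δ * Real.cos β ≤ Real.sin (β + δ) + δ^2 := by
  rcases eq_or_lt_of_le hδ with h | h
  · simp [← h]
  have h1 : Real.sin (β + δ) = Real.sin β * Real.cos δ + Real.cos β * Real.sin δ :=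
    Real.sin_add β δ
  have h2 : 1 - δ^2/2 ≤ Real.cos δ := Real.one_sub_sq_div_two_le_cos
  have h3 : δ - δ^3/4 < Real.sin δ := by
    have := Real.sin_gt_sub_cube h; linarith [pow_pos h 3]
  have h8 : Real.sin δ < δ := Real.sin_lt h
  have e1 : Real.sin β * (1 - Real.cos δ) ≤ 1 * (δ^2/2) :=
    mul_le_mul (Real.sin_le_one β) (by linarith) (by linarith [Real.cos_le_one δ]) one_pos.le
  have e2 : Real.cos β * (δ - Real.sin δ) ≤ 1 * (δ^3/4) :=
    mul_le_mul (Real.cos_le_one β) (by linarith) (by linarith) one_pos.le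
  have e3 : δ^3 ≤ δ^2 := by nlinarith
  nlinarith [h1, e1, e2, e3]

private lemma abs_eq_sqrt' {a b : ℝ} (ha : 0 ≤ a) (h : a^2 + b^2 = 1) :
    a = Real.sqrt (1 - b^2) := by
  rw [show (1:ℝ) - b^2 = a^2 by linarith, Real.sqrt_sq ha]

end helpers

open MeasureTheory intervalIntegral Real Topology

set_option maxHeartbeats 2000000 in
/-- Lower bound on the population of the first level (and upper bound on the
second) for the two-level Galerkin approximation of the planar molecule, in
terms of the `L¹` norm of the control. -/
theorem two_level_population_bounds
    (T : ℝ) (hT : 0 < T)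
    (u : ℝ → ℝ) (hu_int : IntegrableOn u (Set.Icc 0 T))
    (hu_pi : (∫ t in (0 : ℝ)..T, |u t|) < π)
    (x₁ x₂ : ℝ → ℂ) (hx₁_cont : Continuous x₁) (hx₂_cont : Continuous x₂)
    (hx₁ : ∀ t ∈ Set.Icc (0 : ℝ) T,
      x₁ t = x₁ 0 + ∫ s in (0 : ℝ)..t,
        (-Complex.I * x₁ s - (Complex.I / 2) * (u s : ℂ) * x₂ s))
    (hx₂ : ∀ t ∈ Set.Icc (0 : ℝ) T,
      x₂ t = x₂ 0 + ∫ s in (0 : ℝ)..t,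
        (-4 * Complex.I * x₂ s - (Complex.I / 2) * (u s : ℂ) * x₁ s))
    (hinit₁ : x₁ 0 = 1) (hinit₂ : x₂ 0 = 0) :
    Real.cos ((∫ t in (0 : ℝ)..T, |u t|) / 2) ≤ ‖x₁ T‖ ∧
    ‖x₂ T‖ ≤ Real.sin ((∫ t in (0 : ℝ)..T, |u t|) / 2) := by
  have hT0 : (0:ℝ) ≤ T := hT.le
  have h0mem : (0:ℝ) ∈ Set.Icc (0:ℝ) T := ⟨le_refl 0, hT0⟩
  have hTmem : T ∈ Set.Icc (0:ℝ) T := ⟨hT0, le_refl T⟩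
  have hu_abs : IntegrableOn (fun s => |u s|) (Set.Icc 0 T) := hu_int.abs
  have huC : IntegrableOn (fun s => (u s : ℂ)) (Set.Icc 0 T) := hu_int.ofReal
  set φ : ℝ → ℝ := fun s => (∫ r in (0:ℝ)..s, |u r|) / 2 with hφdef
  have hsubset : ∀ {s t : ℝ}, s ∈ Set.Icc (0:ℝ) T → t ∈ Set.Icc (0:ℝ) T →
      Set.uIoc s t ⊆ Set.Icc (0:ℝ) T := by
    intro s t hs ht r hr
    exact ⟨le_trans (le_min hs.1 ht.1) hr.1.le, le_trans hr.2 (max_le hs.2 ht.2)⟩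
  have hII : ∀ {E : Type} [NormedAddCommGroup E] (F : ℝ → E),
      IntegrableOn F (Set.Icc 0 T) → ∀ {s t : ℝ}, s ∈ Set.Icc (0:ℝ) T →
      t ∈ Set.Icc (0:ℝ) T → IntervalIntegrable F volume s t := by
    intro E _ F hF s t hs ht
    exact intervalIntegrable_iff.2 (hF.mono_set (hsubset hs ht))
  have huII : ∀ {s t : ℝ}, s ∈ Set.Icc (0:ℝ) T → t ∈ Set.Icc (0:ℝ) T →
      IntervalIntegrable (fun r => |u r|) volume s t := fun hs ht => hII _ hu_abs hs ht
  -- basic facts about φ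
  have hφ0 : φ 0 = 0 := by simp [hφdef]
  have hφadd : ∀ {s t : ℝ}, s ∈ Set.Icc (0:ℝ) T → t ∈ Set.Icc (0:ℝ) T →
      φ t - φ s = (∫ r in s..t, |u r|) / 2 := by
    intro s t hs ht
    have h := integral_add_adjacent_intervals (huII h0mem hs) (huII hs ht)
    simp only [hφdef]
    linarith
  have hφmono : ∀ {s t : ℝ}, s ∈ Set.Icc (0:ℝ) T → t ∈ Set.Icc (0:ℝ) T → s ≤ t →
      φ s ≤ φ t := by
    intro s t hs ht hst
    have h1 := hφadd hs ht
    have h2 : 0 ≤ ∫ r in s..t, |u r| :=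
      intervalIntegral.integral_nonneg hst (fun x _ => abs_nonneg _)
    linarith
  have hφcont : ContinuousOn φ (Set.Icc 0 T) := by
    have h := intervalIntegral.continuousOn_primitive_interval
      (f := fun r => |u r|) (a := (0:ℝ)) (b := T) (μ := volume)
      (by rw [Set.uIcc_of_le hT0]; exact hu_abs)
    rw [Set.uIcc_of_le hT0] at h
    exact h.div_const 2
  have hφT2 : φ T < π/2 := by
    simp only [hφdef]
    linarith
  have hφnonneg : ∀ {t : ℝ}, t ∈ Set.Icc (0:ℝ) T → 0 ≤ φ t := by
    intro t ht
    have := hφmono h0mem ht ht.1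
    linarith [hφ0.symm.le.trans this]
  -- integrability of the vector fields
  have hf₁ : IntegrableOn
      (fun s => -Complex.I * x₁ s - Complex.I / 2 * (u s : ℂ) * x₂ s) (Set.Icc 0 T) := by
    refine Integrable.sub ((continuous_const.mul hx₁_cont).integrableOn_Icc) ?_
    exact MeasureTheory.IntegrableOn.mul_continuousOn (huC.const_mul (Complex.I / 2)) hx₂_cont.continuousOn isCompact_Icc
  have hf₂ : IntegrableOn
      (fun s => -4 * Complex.I * x₂ s - Complex.I / 2 * (u s : ℂ) * x₁ s) (Set.Icc 0 T) := by
    refine Integrable.sub ((continuous_const.mul hx₂_cont).integrableOn_Icc) ?_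
    exact MeasureTheory.IntegrableOn.mul_continuousOn (huC.const_mul (Complex.I / 2)) hx₁_cont.continuousOn isCompact_Icc
  -- conjugated integral equations
  have hconj_int : ∀ (h : ℝ → ℂ) (t : ℝ), 0 ≤ t →
      (starRingEnd ℂ) (∫ s in (0:ℝ)..t, h s) = ∫ s in (0:ℝ)..t, (starRingEnd ℂ) (h s) := by
    intro h t ht
    rw [intervalIntegral.integral_of_le ht, intervalIntegral.integral_of_le ht,
      integral_conj]
  have hx₁star : ∀ t ∈ Set.Icc (0:ℝ) T, (starRingEnd ℂ) (x₁ t) = (starRingEnd ℂ) (x₁ 0) +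
      ∫ s in (0:ℝ)..t, (starRingEnd ℂ)
        (-Complex.I * x₁ s - Complex.I / 2 * (u s : ℂ) * x₂ s) := by
    intro t ht
    rw [hx₁ t ht, map_add, hconj_int _ t ht.1]
  have hx₂star : ∀ t ∈ Set.Icc (0:ℝ) T, (starRingEnd ℂ) (x₂ t) = (starRingEnd ℂ) (x₂ 0) +
      ∫ s in (0:ℝ)..t, (starRingEnd ℂ)
        (-4 * Complex.I * x₂ s - Complex.I / 2 * (u s : ℂ) * x₁ s) := by
    intro t ht
    rw [hx₂ t ht, map_add, hconj_int _ t ht.1]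
  have hconj_integrable : ∀ (F : ℝ → ℂ), IntegrableOn F (Set.Icc 0 T) →
      IntegrableOn (fun s => (starRingEnd ℂ) (F s)) (Set.Icc 0 T) := by
    intro F hF
    refine hF.norm.mono' (RCLike.continuous_conj.comp_aestronglyMeasurable
      hF.aestronglyMeasurable) ?_
    exact Filter.Eventually.of_forall (fun s => by simp)
  have hP1 := prodRule T _ _ x₁ (fun t => (starRingEnd ℂ) (x₁ t)) hf₁
    (hconj_integrable _ hf₁) hx₁ hx₁star
  have hP2 := prodRule T _ _ x₂ (fun t => (starRingEnd ℂ) (x₂ t)) hf₂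
    (hconj_integrable _ hf₂) hx₂ hx₂star
  -- conservation of the norm
  have hcons : ∀ r ∈ Set.Icc (0:ℝ) T,
      ‖x₁ r‖ ^ 2 + ‖x₂ r‖ ^ 2 = 1 := by
    intro r hr
    have e1 := hP1 r hr
    have e2 := hP2 r hr
    have hpt : (∫ s in (0:ℝ)..r,
          (x₁ s * (starRingEnd ℂ) (-Complex.I * x₁ s - Complex.I / 2 * (u s : ℂ) * x₂ s)
          + (-Complex.I * x₁ s - Complex.I / 2 * (u s : ℂ) * x₂ s) * (starRingEnd ℂ) (x₁ s)))
        = ∫ s in (0:ℝ)..r,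
          -((x₂ s * (starRingEnd ℂ) (-4 * Complex.I * x₂ s - Complex.I / 2 * (u s : ℂ) * x₁ s)
          + (-4 * Complex.I * x₂ s - Complex.I / 2 * (u s : ℂ) * x₁ s) * (starRingEnd ℂ) (x₂ s))) := by
      apply intervalIntegral.integral_congr
      intro s _
      simp only [map_sub, map_mul, map_div₀, Complex.conj_I, Complex.conj_ofReal, map_neg,
        map_ofNat]
      ring
    have key : x₁ r * (starRingEnd ℂ) (x₁ r) + x₂ r * (starRingEnd ℂ) (x₂ r) = 1 := by
      rw [e1, e2, hpt, intervalIntegral.integral_neg]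
      simp only [hinit₁, hinit₂, map_one, map_zero]
      ring
    rw [Complex.mul_conj, Complex.mul_conj, ← Complex.ofReal_add] at key
    have key2 : Complex.normSq (x₁ r) + Complex.normSq (x₂ r) = 1 := by exact_mod_cast key
    simpa [Complex.normSq_eq_norm_sq] using key2
  have habs₁ : ∀ r ∈ Set.Icc (0:ℝ) T, ‖x₁ r‖ ≤ 1 := by
    intro r hr
    nlinarith [hcons r hr, norm_nonneg (x₁ r), sq_nonneg (‖x₂ r‖)]
  have habs₂ : ∀ r ∈ Set.Icc (0:ℝ) T, ‖x₂ r‖ ≤ 1 := by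
    intro r hr
    nlinarith [hcons r hr, norm_nonneg (x₂ r), sq_nonneg (‖x₁ r‖)]
  -- the rotating exponentials are primitives
  have hE1 : ∀ t ∈ Set.Icc (0:ℝ) T, Complex.exp (Complex.I * (t:ℝ))
      = Complex.exp (Complex.I * ((0:ℝ):ℂ)) + ∫ s in (0:ℝ)..t,
        Complex.I * Complex.exp (Complex.I * (s:ℝ)) := by
    intro t ht
    rw [intervalIntegral.integral_const_mul, integral_exp_mul_complex Complex.I_ne_zero,
      mul_div_assoc', mul_div_cancel_left₀ _ Complex.I_ne_zero]
    ring
  have hE4 : ∀ t ∈ Set.Icc (0:ℝ) T, Complex.exp (4 * Complex.I * (t:ℝ))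
      = Complex.exp (4 * Complex.I * ((0:ℝ):ℂ)) + ∫ s in (0:ℝ)..t,
        (4 * Complex.I) * Complex.exp (4 * Complex.I * (s:ℝ)) := by
    intro t ht
    have h4I : (4 : ℂ) * Complex.I ≠ 0 := mul_ne_zero (by norm_num) Complex.I_ne_zero
    rw [intervalIntegral.integral_const_mul, integral_exp_mul_complex h4I,
      mul_div_assoc', mul_div_cancel_left₀ _ h4I]
    ring
  have hcontE1 : Continuous fun s : ℝ => Complex.exp (Complex.I * (s:ℝ)) :=
    Complex.continuous_exp.comp (continuous_const.mul Complex.continuous_ofReal)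
  have hcontE4 : Continuous fun s : ℝ => Complex.exp (4 * Complex.I * (s:ℝ)) :=
    Complex.continuous_exp.comp (continuous_const.mul Complex.continuous_ofReal)
  have hP3 := prodRule T _ (fun s => Complex.I * Complex.exp (Complex.I * (s:ℝ))) x₁
    (fun s => Complex.exp (Complex.I * (s:ℝ))) hf₁
    ((continuous_const.mul hcontE1).integrableOn_Icc) hx₁ hE1
  have hP4 := prodRule T _ (fun s => (4 * Complex.I) * Complex.exp (4 * Complex.I * (s:ℝ))) x₂
    (fun s => Complex.exp (4 * Complex.I * (s:ℝ))) hf₂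
    ((continuous_const.mul hcontE4).integrableOn_Icc) hx₂ hE4
  -- interaction picture equations
  have hy₁ : ∀ t ∈ Set.Icc (0:ℝ) T, x₁ t * Complex.exp (Complex.I * (t:ℝ))
      = 1 + ∫ s in (0:ℝ)..t,
        (-(Complex.I/2) * (u s : ℂ)) * (x₂ s * Complex.exp (Complex.I * (s:ℝ))) := by
    intro t ht
    have h3 := hP3 t ht
    rw [hinit₁] at h3
    rw [h3, show Complex.exp (Complex.I * ((0:ℝ):ℂ)) = 1 by simp, mul_one]
    congr 1
    apply intervalIntegral.integral_congr
    intro s _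
    ring
  have hy₂ : ∀ t ∈ Set.Icc (0:ℝ) T, x₂ t * Complex.exp (4 * Complex.I * (t:ℝ))
      = ∫ s in (0:ℝ)..t,
        (-(Complex.I/2) * (u s : ℂ)) * (x₁ s * Complex.exp (4 * Complex.I * (s:ℝ))) := by
    intro t ht
    have h4 := hP4 t ht
    rw [hinit₂, zero_mul, zero_add] at h4
    rw [h4]
    apply intervalIntegral.integral_congr
    intro s _
    ring
  -- integrability of the interaction integrands
  have hh₁int : IntegrableOn
      (fun s => (-(Complex.I/2) * (u s : ℂ)) * (x₂ s * Complex.exp (Complex.I * (s:ℝ))))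
      (Set.Icc 0 T) :=
    MeasureTheory.IntegrableOn.mul_continuousOn (huC.const_mul (-(Complex.I/2)))
      (hx₂_cont.mul hcontE1).continuousOn isCompact_Icc
  have hh₂int : IntegrableOn
      (fun s => (-(Complex.I/2) * (u s : ℂ)) * (x₁ s * Complex.exp (4 * Complex.I * (s:ℝ))))
      (Set.Icc 0 T) :=
    MeasureTheory.IntegrableOn.mul_continuousOn (huC.const_mul (-(Complex.I/2)))
      (hx₁_cont.mul hcontE4).continuousOn isCompact_Icc
  -- modulus of the exponentials
  have habsE1 : ∀ s : ℝ, ‖Complex.exp (Complex.I * (s:ℝ))‖ = 1 := by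
    intro s
    rw [Complex.norm_exp]
    simp
  have habsE4 : ∀ s : ℝ, ‖Complex.exp (4 * Complex.I * (s:ℝ))‖ = 1 := by
    intro s
    rw [Complex.norm_exp]
    simp
  have hnorm₁ : ∀ s : ℝ, ‖(-(Complex.I/2) * (u s : ℂ)) * (x₂ s * Complex.exp (Complex.I * (s:ℝ)))‖
      = |u s| / 2 * ‖x₂ s‖ := by
    intro s
    simp only [norm_mul, habsE1 s, Complex.norm_real, Real.norm_eq_abs, norm_neg, norm_div,
      Complex.norm_I, Complex.norm_two, mul_one]
    ring
  have hnorm₂ : ∀ s : ℝ, ‖(-(Complex.I/2) * (u s : ℂ)) * (x₁ s * Complex.exp (4 * Complex.I * (s:ℝ)))‖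
      = |u s| / 2 * ‖x₁ s‖ := by
    intro s
    simp only [norm_mul, habsE4 s, Complex.norm_real, Real.norm_eq_abs, norm_neg, norm_div,
      Complex.norm_I, Complex.norm_two, mul_one]
    ring
  -- increments of the interaction-picture solutions
  have hdiff₁ : ∀ {s t : ℝ}, s ∈ Set.Icc (0:ℝ) T → t ∈ Set.Icc (0:ℝ) T →
      x₁ t * Complex.exp (Complex.I * (t:ℝ)) - x₁ s * Complex.exp (Complex.I * (s:ℝ))
      = ∫ r in s..t, (-(Complex.I/2) * (u r : ℂ)) * (x₂ r * Complex.exp (Complex.I * (r:ℝ))) := by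
    intro s t hs ht
    rw [hy₁ t ht, hy₁ s hs, add_sub_add_left_eq_sub]
    exact integral_interval_sub_left (hII _ hh₁int h0mem ht) (hII _ hh₁int h0mem hs)
  have hdiff₂ : ∀ {s t : ℝ}, s ∈ Set.Icc (0:ℝ) T → t ∈ Set.Icc (0:ℝ) T →
      x₂ t * Complex.exp (4 * Complex.I * (t:ℝ)) - x₂ s * Complex.exp (4 * Complex.I * (s:ℝ))
      = ∫ r in s..t, (-(Complex.I/2) * (u r : ℂ)) * (x₁ r * Complex.exp (4 * Complex.I * (r:ℝ))) := by
    intro s t hs ht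
    rw [hy₂ t ht, hy₂ s hs]
    exact integral_interval_sub_left (hII _ hh₂int h0mem ht) (hII _ hh₂int h0mem hs)
  have habs_mul₁ : ∀ s : ℝ,
      ‖x₁ s * Complex.exp (Complex.I * (s:ℝ))‖ = ‖x₁ s‖ := by
    intro s; rw [norm_mul, habsE1, mul_one]
  have habs_mul₄ : ∀ s : ℝ,
      ‖x₂ s * Complex.exp (4 * Complex.I * (s:ℝ))‖ = ‖x₂ s‖ := by
    intro s; rw [norm_mul, habsE4, mul_one]
  have hmemtrans : ∀ {s t r : ℝ}, s ∈ Set.Icc (0:ℝ) T → t ∈ Set.Icc (0:ℝ) T →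
      r ∈ Set.Icc s t → r ∈ Set.Icc (0:ℝ) T :=
    fun hs ht hr => ⟨le_trans hs.1 hr.1, le_trans hr.2 ht.2⟩
  have hinc₁ : ∀ {s t : ℝ}, s ∈ Set.Icc (0:ℝ) T → t ∈ Set.Icc (0:ℝ) T → s ≤ t →
      ‖x₁ t‖ ≤ ‖x₁ s‖ + (φ t - φ s) := by
    intro s t hs ht hst
    have h1 : ‖x₁ t * Complex.exp (Complex.I * (t:ℝ))
        - x₁ s * Complex.exp (Complex.I * (s:ℝ))‖ ≤ φ t - φ s := by
      rw [hdiff₁ hs ht]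
      refine le_trans (intervalIntegral.norm_integral_le_integral_norm hst) ?_
      have hptw : ∀ r ∈ Set.Icc s t,
          ‖(-(Complex.I/2) * (u r : ℂ)) * (x₂ r * Complex.exp (Complex.I * (r:ℝ)))‖
          ≤ |u r| / 2 := by
        intro r hr
        rw [hnorm₁ r]
        have h2 := habs₂ r (hmemtrans hs ht hr)
        nlinarith [abs_nonneg (u r), norm_nonneg (x₂ r)]
      have hm := intervalIntegral.integral_mono_on hst ((hII _ hh₁int hs ht).norm)
        ((huII hs ht).div_const 2) hptw
      rw [intervalIntegral.integral_div] at hm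
      linarith [hφadd hs ht]
    have h3 := norm_add_le (x₁ s * Complex.exp (Complex.I * (s:ℝ)))
      (x₁ t * Complex.exp (Complex.I * (t:ℝ)) - x₁ s * Complex.exp (Complex.I * (s:ℝ)))
    rw [show x₁ s * Complex.exp (Complex.I * (s:ℝ))
        + (x₁ t * Complex.exp (Complex.I * (t:ℝ)) - x₁ s * Complex.exp (Complex.I * (s:ℝ)))
        = x₁ t * Complex.exp (Complex.I * (t:ℝ)) by ring] at h3
    rw [habs_mul₁ t, habs_mul₁ s] at h3
    linarith
  have hinc₂ : ∀ {s t : ℝ}, s ∈ Set.Icc (0:ℝ) T → t ∈ Set.Icc (0:ℝ) T → s ≤ t →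
      ‖x₂ t‖ ≤ ‖x₂ s‖
        + (φ t - φ s) * (‖x₁ s‖ + (φ t - φ s)) := by
    intro s t hs ht hst
    have hδ0 : 0 ≤ φ t - φ s := by linarith [hφmono hs ht hst]
    have h1 : ‖x₂ t * Complex.exp (4 * Complex.I * (t:ℝ))
        - x₂ s * Complex.exp (4 * Complex.I * (s:ℝ))‖
        ≤ (φ t - φ s) * (‖x₁ s‖ + (φ t - φ s)) := by
      rw [hdiff₂ hs ht]
      refine le_trans (intervalIntegral.norm_integral_le_integral_norm hst) ?_
      have hptw : ∀ r ∈ Set.Icc s t,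
          ‖(-(Complex.I/2) * (u r : ℂ)) * (x₁ r * Complex.exp (4 * Complex.I * (r:ℝ)))‖
          ≤ |u r| / 2 * (‖x₁ s‖ + (φ t - φ s)) := by
        intro r hr
        rw [hnorm₂ r]
        have hr' := hmemtrans hs ht hr
        have h2 : ‖x₁ r‖ ≤ ‖x₁ s‖ + (φ r - φ s) :=
          hinc₁ hs hr' hr.1
        have h3 : φ r ≤ φ t := hφmono hr' ht hr.2
        have h4 : ‖x₁ r‖ ≤ ‖x₁ s‖ + (φ t - φ s) := by linarith
        have h5 : (0:ℝ) ≤ |u r| / 2 := by positivity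
        exact mul_le_mul_of_nonneg_left h4 h5
      have hm := intervalIntegral.integral_mono_on hst ((hII _ hh₂int hs ht).norm)
        (((huII hs ht).div_const 2).mul_const _) hptw
      rw [intervalIntegral.integral_mul_const, intervalIntegral.integral_div] at hm
      have h6 := hφadd hs ht
      calc ∫ r in s..t, ‖(-(Complex.I/2) * (u r : ℂ))
            * (x₁ r * Complex.exp (4 * Complex.I * (r:ℝ)))‖
          ≤ (∫ r in s..t, |u r|) / 2 * (‖x₁ s‖ + (φ t - φ s)) := hm
        _ = (φ t - φ s) * (‖x₁ s‖ + (φ t - φ s)) := by rw [← h6]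
    have h3 := norm_add_le (x₂ s * Complex.exp (4 * Complex.I * (s:ℝ)))
      (x₂ t * Complex.exp (4 * Complex.I * (t:ℝ)) - x₂ s * Complex.exp (4 * Complex.I * (s:ℝ)))
    rw [show x₂ s * Complex.exp (4 * Complex.I * (s:ℝ))
        + (x₂ t * Complex.exp (4 * Complex.I * (t:ℝ))
            - x₂ s * Complex.exp (4 * Complex.I * (s:ℝ)))
        = x₂ t * Complex.exp (4 * Complex.I * (t:ℝ)) by ring] at h3
    rw [habs_mul₄ t, habs_mul₄ s] at h3
    linarith
  -- setup for the discrete comparison argument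
  have hφT0 : 0 ≤ φ T := hφnonneg hTmem
  set τ : ℝ := (φ T + π/2)/2 with hτdef
  have hττ1 : φ T < τ := by rw [hτdef]; linarith
  have hττ2 : τ < π/2 := by rw [hτdef]; linarith
  have hτpos : 0 < τ := by rw [hτdef]; linarith [Real.pi_pos]
  have hcosτ : 0 < Real.cos τ := Real.cos_pos_of_mem_Ioo ⟨by linarith [Real.pi_pos], hττ2⟩
  set C : ℝ := 2 / Real.cos τ with hCdef
  have hC0 : 0 < C := by rw [hCdef]; positivity
  have h2C : C * Real.cos τ = 2 := by
    rw [hCdef, div_mul_cancel₀]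
    exact ne_of_gt hcosτ
  have main : ∀ n : ℕ, 0 < φ T / (n:ℝ) → φ T / (n:ℝ) ≤ 1 →
      (n:ℝ) * (φ T / (n:ℝ) + C * (φ T / (n:ℝ))^2) ≤ τ →
      ‖x₂ T‖ ≤ Real.sin ((n:ℝ) * (φ T / (n:ℝ) + C * (φ T / (n:ℝ))^2)) := by
    intro n hd hd1 hθτ
    set d := φ T / (n:ℝ) with hddef
    have hn0 : (0:ℝ) < (n:ℝ) := by
      rcases Nat.eq_zero_or_pos n with h | h
      · subst h; simp [hddef] at hd
      · exact_mod_cast h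
    have hnd : (n:ℝ) * d = φ T := by
      rw [hddef]; field_simp
    have hdC0 : 0 ≤ d + C*d^2 :=
      add_nonneg hd.le (mul_nonneg hC0.le (sq_nonneg d))
    have claim : ∀ k : ℕ, k ≤ n → ∃ tk, tk ∈ Set.Icc (0:ℝ) T ∧ φ tk = (k:ℝ) * d ∧
        ‖x₂ tk‖ ≤ Real.sin ((k:ℝ) * (d + C * d^2)) := by
      intro k
      induction k with
      | zero => intro _; exact ⟨0, h0mem, by simp [hφ0], by simp [hinit₂]⟩
      | succ k ih =>
        intro hk1
        obtain ⟨tk, htk, hφtk, hBk⟩ := ih (le_of_lt (Nat.lt_of_succ_le hk1))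
        have hkn : ((k:ℝ)+1) ≤ (n:ℝ) := by exact_mod_cast hk1
        have hmem2 : ((k:ℝ)+1) * d ∈ Set.Icc (φ 0) (φ T) := by
          rw [hφ0]
          refine ⟨mul_nonneg (by positivity) hd.le, ?_⟩
          rw [← hnd]
          exact mul_le_mul_of_nonneg_right hkn hd.le
        obtain ⟨t', ht', hφt'⟩ := intermediate_value_Icc hT0 hφcont hmem2
        have hord : tk ≤ t' := by
          by_contra hcon
          push_neg at hcon
          have hm := hφmono ht' htk hcon.le
          rw [hφt', hφtk] at hm
          nlinarith
        have hdelta : φ t' - φ tk = d := by rw [hφt', hφtk]; ring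
        have hstep := hinc₂ htk ht' hord
        rw [hdelta] at hstep
        set B := ‖x₂ tk‖ with hBdef
        have hB0 : 0 ≤ B := norm_nonneg _
        have hB1 : B ≤ 1 := habs₂ tk htk
        have hA : ‖x₁ tk‖ = Real.sqrt (1 - B^2) :=
          abs_eq_sqrt' (norm_nonneg _) (hcons tk htk)
        rw [hA] at hstep
        set β := Real.arcsin B with hβdef
        have hβ0 : 0 ≤ β := Real.arcsin_nonneg.2 hB0
        have hsinβ : Real.sin β = B := Real.sin_arcsin (by linarith) hB1
        have hcosβ : Real.cos β = Real.sqrt (1 - B^2) := Real.cos_arcsin B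
        have hθk1 : ((k:ℝ)+1) * (d + C*d^2) ≤ τ :=
          le_trans (mul_le_mul_of_nonneg_right hkn hdC0) hθτ
        have hθk0 : 0 ≤ (k:ℝ) * (d + C*d^2) := mul_nonneg (Nat.cast_nonneg k) hdC0
        have hCd20 : 0 ≤ C * d^2 := mul_nonneg hC0.le (sq_nonneg d)
        have hθkτ : (k:ℝ) * (d + C*d^2) + d + C*d^2 ≤ τ := by
          have hexp : ((k:ℝ)+1)*(d+C*d^2) = (k:ℝ)*(d+C*d^2) + d + C*d^2 := by ring
          linarith
        have hβθ : β ≤ (k:ℝ) * (d + C*d^2) := by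
          have ha1 := Real.monotone_arcsin hBk
          rw [← hβdef] at ha1
          rwa [Real.arcsin_sin (by linarith [Real.pi_pos])
            (by linarith [Real.pi_pos])] at ha1
        have key1 : ‖x₂ t'‖ ≤ Real.sin (β + d) + 2*d^2 := by
          have hsga := sin_add_ge_aux hd.le hd1 (β := β)
          have hdc : d * Real.cos β = d * Real.sqrt (1 - B^2) := by rw [hcosβ]
          linarith [hstep, hsga, hsinβ, hdc]
        have key2 : Real.sin (β + d) ≤ Real.sin ((k:ℝ)*(d+C*d^2) + d) := by
          apply Real.strictMonoOn_sin.monotoneOn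
            ⟨by linarith [Real.pi_pos], by linarith⟩
            ⟨by linarith [Real.pi_pos], by linarith⟩ (by linarith)
        have key3 : Real.sin ((k:ℝ)*(d+C*d^2) + d) + 2*d^2
            ≤ Real.sin ((k:ℝ)*(d+C*d^2) + d + C*d^2) := by
          have hx0 : 0 ≤ (k:ℝ)*(d+C*d^2) + d := by linarith
          have hs := sin_add_le_aux hx0 hCd20 (by linarith)
          have hcos2 : Real.cos τ ≤ Real.cos ((k:ℝ)*(d+C*d^2) + d + C*d^2) :=
            Real.cos_le_cos_of_nonneg_of_le_pi (by linarith)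
              (by linarith [Real.pi_pos]) (by linarith)
          have hmm := mul_le_mul_of_nonneg_left hcos2 hCd20
          have h2d : C*d^2 * Real.cos τ = 2*d^2 := by
            linear_combination d^2 * h2C
          linarith
        refine ⟨t', ht', by rw [hφt']; push_cast; ring, ?_⟩
        push_cast
        calc ‖x₂ t'‖ ≤ Real.sin (β + d) + 2*d^2 := key1
          _ ≤ Real.sin ((k:ℝ)*(d+C*d^2) + d) + 2*d^2 := by linarith
          _ ≤ Real.sin ((k:ℝ)*(d+C*d^2) + d + C*d^2) := key3
          _ = Real.sin (((k:ℝ)+1)*(d+C*d^2)) := by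
              rw [show (k:ℝ)*(d+C*d^2) + d + C*d^2 = ((k:ℝ)+1)*(d+C*d^2) by ring]
    obtain ⟨tn, htn, hφtn, hBn⟩ := claim n (le_refl n)
    have hφtnT : φ tn = φ T := by rw [hφtn, hnd]
    have hbridge := hinc₂ htn hTmem htn.2
    rw [hφtnT, sub_self] at hbridge
    simp only [zero_mul, add_zero] at hbridge
    exact le_trans hbridge hBn
  -- conclusion
  have hgoalφ : (∫ t in (0:ℝ)..T, |u t|)/2 = φ T := by simp only [hφdef]
  rcases eq_or_lt_of_le hφT0 with hzero | hpos
  · -- the control is a.e. zero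
    have h20 : ‖x₂ T‖ ≤ 0 := by
      have h := hinc₂ h0mem hTmem hT0
      rw [hinit₂, hφ0, ← hzero] at h
      simpa using h
    have h2eq : ‖x₂ T‖ = 0 := le_antisymm h20 (norm_nonneg _)
    have h1sq : ‖x₁ T‖^2 = 1 := by
      have hc := hcons T hTmem
      rw [h2eq] at hc
      nlinarith
    have h1eq : ‖x₁ T‖ = 1 := by
      rw [← Real.sqrt_sq (norm_nonneg (x₁ T)), h1sq, Real.sqrt_one]
    rw [hgoalφ, ← hzero]
    constructor
    · rw [Real.cos_zero, h1eq]
    · rw [Real.sin_zero, h2eq]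
  · -- positive total control
    have hlim : Filter.Tendsto (fun n : ℕ => φ T + C * φ T^2 / (n:ℝ))
        Filter.atTop (𝓝 (φ T)) := by
      have h1 := Filter.Tendsto.add (tendsto_const_nhds (x := φ T) (f := Filter.atTop (α := ℕ)))
        (tendsto_const_div_atTop_nhds_zero_nat (C * φ T^2))
      rwa [add_zero] at h1
    have hlimsin : Filter.Tendsto (fun n : ℕ => Real.sin (φ T + C * φ T^2 / (n:ℝ)))
        Filter.atTop (𝓝 (Real.sin (φ T))) :=
      (Real.continuous_sin.continuousAt.tendsto).comp hlim
    have hev : ∀ᶠ n : ℕ in Filter.atTop,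
        ‖x₂ T‖ ≤ Real.sin (φ T + C * φ T^2 / (n:ℝ)) := by
      have e1 : ∀ᶠ n : ℕ in Filter.atTop, 1 ≤ n := Filter.eventually_ge_atTop 1
      have e2 : ∀ᶠ n : ℕ in Filter.atTop, φ T / (n:ℝ) < 1 :=
        (tendsto_const_div_atTop_nhds_zero_nat (φ T)).eventually_lt_const one_pos
      have e3 : ∀ᶠ n : ℕ in Filter.atTop, φ T + C * φ T^2 / (n:ℝ) < τ :=
        hlim.eventually_lt_const hττ1
      filter_upwards [e1, e2, e3] with n h1n h2n h3n
      have hn0 : (0:ℝ) < (n:ℝ) := by exact_mod_cast h1n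
      have hrw : (n:ℝ) * (φ T / (n:ℝ) + C * (φ T / (n:ℝ))^2) = φ T + C * φ T^2 / (n:ℝ) := by
        field_simp
      have hmn := main n (div_pos hpos hn0) h2n.le (by rw [hrw]; exact h3n.le)
      rwa [hrw] at hmn
    have hsin : ‖x₂ T‖ ≤ Real.sin (φ T) := ge_of_tendsto hlimsin hev
    rw [hgoalφ]
    have hsinnn : 0 ≤ Real.sin (φ T) :=
      Real.sin_nonneg_of_nonneg_of_le_pi hφT0 (by linarith [Real.pi_pos])
    have hcosnn : 0 ≤ Real.cos (φ T) :=
      Real.cos_nonneg_of_mem_Icc ⟨by linarith [Real.pi_pos], hφT2.le⟩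
    refine ⟨?_, hsin⟩
    have hpyth := Real.sin_sq_add_cos_sq (φ T)
    nlinarith [hcons T hTmem, norm_nonneg (x₁ T), norm_nonneg (x₂ T),
      mul_le_mul hsin hsin (norm_nonneg (x₂ T)) hsinnn,
      sq_nonneg (‖x₁ T‖ + Real.cos (φ T)),
      sq_nonneg (‖x₁ T‖ - Real.cos (φ T))]
end

section
/- For every ε > 0 there exist T > 0, an integrable control u : ℝ → ℝ with ∫₀ᵀ |u(t)| dt ≤ π + ε, and continuous functions x₁, x₂ : ℝ → ℂ satisfying, for all t ∈ [0,T], x₁(t) = 1 + ∫₀ᵗ (−i·x₁(s) − (i/2)·u(s)·x₂(s)) ds and x₂(t) = ∫₀ᵗ (−4i·x₂(s) − (i/2)·u(s)·x₁(s)) ds, such that |x₂(T)| ≥ 1 − ε. -/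
open MeasureTheory intervalIntegral Real

private lemma lin_deriv (c : ℂ) (z : ℂ) : HasDerivAt (fun w : ℂ => c * w) c z := by
  simpa using (hasDerivAt_id z).const_mul c

/-- Upper-bound half of `𝒞₁(φ₁,φ₂) = π` for the two-level Galerkin
approximation of the planar molecule: the eigenstate transfer can be achieved
with arbitrary precision by controls of `L¹`-norm arbitrarily close to `π`. -/
theorem two_level_transfer_L1_upper_bound :
    ∀ ε > (0 : ℝ), ∃ T > (0 : ℝ), ∃ u : ℝ → ℝ,
      IntegrableOn u (Set.Icc 0 T) ∧
      (∫ t in (0 : ℝ)..T, |u t|) ≤ π + ε ∧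
      ∃ x₁ x₂ : ℝ → ℂ, Continuous x₁ ∧ Continuous x₂ ∧
        (∀ t ∈ Set.Icc (0 : ℝ) T,
          x₁ t = 1 + ∫ s in (0 : ℝ)..t,
            (-Complex.I * x₁ s - (Complex.I / 2) * (u s : ℂ) * x₂ s)) ∧
        (∀ t ∈ Set.Icc (0 : ℝ) T,
          x₂ t = ∫ s in (0 : ℝ)..t,
            (-4 * Complex.I * x₂ s - (Complex.I / 2) * (u s : ℂ) * x₁ s)) ∧
        1 - ε ≤ ‖x₂ T‖ := by
  intro ε hε
  have hm0 : 0 < min ε 1 := lt_min hε one_pos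
  have hm1 : min ε 1 ≤ 1 := min_le_right _ _
  have hmε : min ε 1 ≤ ε := min_le_left _ _
  set m := min ε 1 with hm_def
  have hsm : 0 < Real.sqrt m := Real.sqrt_pos.mpr hm0
  set a : ℝ := 3 / Real.sqrt m with ha_def
  have ha : 0 < a := by positivity
  set Ω : ℝ := Real.sqrt (a^2 + 9/4) with hΩ_def
  have hΩpos : 0 < Ω := Real.sqrt_pos.mpr (by positivity)
  have hΩ2 : Ω^2 = a^2 + 9/4 := Real.sq_sqrt (by positivity)
  have ha2 : a^2 * m = 9 := by
    rw [ha_def, div_pow, Real.sq_sqrt hm0.le]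
    field_simp
    norm_num
  have haΩ : a ≤ Ω := by nlinarith
  set T : ℝ := π / (2*Ω) with hT_def
  have hT : 0 < T := div_pos Real.pi_pos (by positivity)
  have hΩc : (Ω:ℂ) ≠ 0 := by exact_mod_cast hΩpos.ne'
  have hΩ2c : (Ω:ℂ)^2 = (a:ℂ)^2 + 9/4 := by
    rw [← Complex.ofReal_pow, hΩ2]; push_cast; ring
  -- the (unnormalized) explicit Rabi solutions
  set Y₁ : ℂ → ℂ := fun z => Complex.exp (-(5/2)*Complex.I*z) *
      ((Ω:ℂ) * Complex.cos ((Ω:ℂ)*z) + Complex.I*(3/2)*Complex.sin ((Ω:ℂ)*z)) with hY₁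
  set Y₂ : ℂ → ℂ := fun z => Complex.exp (-(5/2)*Complex.I*z) *
      (-Complex.I*(a:ℂ)*Complex.sin ((Ω:ℂ)*z)) with hY₂
  have hd₁ : ∀ z : ℂ, HasDerivAt Y₁ (-Complex.I * Y₁ z - Complex.I*(a:ℂ)*Y₂ z) z := by
    intro z
    have he := (lin_deriv (-(5/2)*Complex.I) z).cexp
    have hc := (lin_deriv (Ω:ℂ) z).ccos
    have hs := (lin_deriv (Ω:ℂ) z).csin
    have h := he.mul ((hc.const_mul (Ω:ℂ)).add (hs.const_mul (Complex.I*(3/2))))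
    refine h.congr_deriv (Eq.symm ?_)
    simp only [hY₁, hY₂, Pi.add_apply]
    linear_combination (Complex.exp (-(5/2)*Complex.I*z) * Complex.sin ((Ω:ℂ)*z)) * hΩ2c +
      (Complex.exp (-(5/2)*Complex.I*z) * Complex.sin ((Ω:ℂ)*z) * ((a:ℂ)^2 + 9/4)) * Complex.I_sq
  have hd₂ : ∀ z : ℂ, HasDerivAt Y₂ (-4*Complex.I * Y₂ z - Complex.I*(a:ℂ)*Y₁ z) z := by
    intro z
    have he := (lin_deriv (-(5/2)*Complex.I) z).cexp
    have hs := (lin_deriv (Ω:ℂ) z).csin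
    have h := he.mul (hs.const_mul (-Complex.I*(a:ℂ)))
    refine h.congr_deriv (Eq.symm ?_)
    simp only [hY₁, hY₂]
    ring
  set x₁ : ℝ → ℂ := fun t => Y₁ t / Ω with hx₁
  set x₂ : ℝ → ℂ := fun t => Y₂ t / Ω with hx₂
  have hcont₁ : Continuous x₁ := by
    simp only [hx₁, hY₁]
    fun_prop
  have hcont₂ : Continuous x₂ := by
    simp only [hx₂, hY₂]
    fun_prop
  have hdx₁ : ∀ t : ℝ, HasDerivAt x₁
      (-Complex.I * x₁ t - (Complex.I/2) * ((2*a : ℝ):ℂ) * x₂ t) t := by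
    intro t
    have := ((hd₁ t).comp_ofReal).div_const (Ω:ℂ)
    refine this.congr_deriv (Eq.symm ?_)
    simp only [hx₁, hx₂]
    push_cast
    ring
  have hdx₂ : ∀ t : ℝ, HasDerivAt x₂
      (-4*Complex.I * x₂ t - (Complex.I/2) * ((2*a : ℝ):ℂ) * x₁ t) t := by
    intro t
    have := ((hd₂ t).comp_ofReal).div_const (Ω:ℂ)
    refine this.congr_deriv (Eq.symm ?_)
    simp only [hx₁, hx₂]
    push_cast
    ring
  have hx₁0 : x₁ 0 = 1 := by
    simp only [hx₁, hY₁]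
    push_cast
    simp [hΩc]
  have hx₂0 : x₂ 0 = 0 := by
    simp only [hx₂, hY₂]
    push_cast
    simp
  refine ⟨T, hT, fun _ => 2*a, ?_, ?_, x₁, x₂, hcont₁, hcont₂, ?_, ?_, ?_⟩
  · exact integrableOn_const measure_Icc_lt_top.ne
  · rw [intervalIntegral.integral_const]
    have h1 : |2*a| = 2*a := abs_of_pos (by positivity)
    have h2 : (T - 0) • |2*a| = π * (a/Ω) := by
      rw [h1, hT_def]
      field_simp
      rw [smul_eq_mul, mul_zero, sub_zero, div_mul_eq_mul_div, mul_div_assoc', div_eq_iff (by positivity)]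
      ring
    rw [h2]
    have : a/Ω ≤ 1 := (div_le_one hΩpos).mpr haΩ
    nlinarith [Real.pi_pos, hε]
  · intro t _
    have key : (∫ s in (0:ℝ)..t,
        (-Complex.I * x₁ s - (Complex.I / 2) * ((2*a:ℝ) : ℂ) * x₂ s)) = x₁ t - x₁ 0 := by
      apply intervalIntegral.integral_eq_sub_of_hasDerivAt
      · intro s _
        exact hdx₁ s
      · apply Continuous.intervalIntegrable
        fun_prop
    rw [key, hx₁0]
    ring
  · intro t _
    have key : (∫ s in (0:ℝ)..t,
        (-4*Complex.I * x₂ s - (Complex.I / 2) * ((2*a:ℝ) : ℂ) * x₁ s)) = x₂ t - x₂ 0 := by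
      apply intervalIntegral.integral_eq_sub_of_hasDerivAt
      · intro s _
        exact hdx₂ s
      · apply Continuous.intervalIntegrable
        fun_prop
    rw [key, hx₂0]
    ring
  · -- final value
    have hΩT : (Ω:ℂ) * (T:ℂ) = ((π/2 : ℝ) : ℂ) := by
      rw [hT_def]
      push_cast
      field_simp
    have hsinT : Complex.sin ((Ω:ℂ) * (T:ℂ)) = 1 := by
      rw [hΩT, ← Complex.ofReal_sin, Real.sin_pi_div_two, Complex.ofReal_one]
    have hexp : ‖Complex.exp (-(5/2)*Complex.I*(T:ℂ))‖ = 1 := by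
      have : (-(5/2)*Complex.I*(T:ℂ)) = ((-(5/2)*T : ℝ):ℂ) * Complex.I := by
        push_cast; ring
      rw [this, Complex.norm_exp_ofReal_mul_I]
    have habs : ‖x₂ T‖ = a / Ω := by
      simp only [hx₂, hY₂, hsinT]
      rw [mul_one, norm_div, norm_mul, hexp, one_mul, norm_mul]
      simp [Complex.norm_real, abs_of_pos ha, abs_of_pos hΩpos]
    rw [habs]
    -- show 1 - ε ≤ a / Ω
    have h1 : a/Ω ≤ 1 := (div_le_one hΩpos).mpr haΩ
    have h2 : 0 < a/Ω := div_pos ha hΩpos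
    have h3 : (1 - m) ≤ (a/Ω)^2 := by
      rw [div_pow, hΩ2]
      rw [le_div_iff₀ (by positivity)]
      nlinarith
    have h4 : (a/Ω)^2 ≤ a/Ω := by nlinarith
    linarith
end
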